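/- arXiv:2102.09800 — 14 statements merged into one kernel-verified Lean document; each statement's English description precedes it below -/
import Mathlib

section
/- In an alternative ring R, for all x, y, r in R one has the identity (x*y)*r - r*(x*y) - x*(y*r - r*y) - (x*r - r*x)*y = 3*((x*y)*r - x*(y*r)), i.e. [x*y, r] - x*[y, r] - [x, r]*y = 3*(x,y,r), where [a,b] = a*b - b*a denotes the commutator and (x,y,z) the associator. -/
theorem stmt_1 {R : Type*} [NonUnitalNonAssocRing R]
    (hl : ∀ x y : R, (x*x)*y = x*(x*y))
    (hr : ∀ x y : R, (y*x)*x = y*(x*x)) :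
    ∀ x y r : R,
      (x*y)*r - r*(x*y) - x*(y*r - r*y) - (x*r - r*x)*y
        = (3 : ℕ) • ((x*y)*r - x*(y*r)) := by
  have L : ∀ x y z : R, (x*y)*z - x*(y*z) = -((y*x)*z - y*(x*z)) := by
    intro x y z
    have h := hl (x+y) z
    simp only [add_mul, mul_add] at h
    rw [hl x z, hl y z] at h
    linear_combination (norm := abel) h
  have Rr : ∀ x y z : R, (x*y)*z - x*(y*z) = -((x*z)*y - x*(z*y)) := by
    intro x y z
    have h := hr (y+z) x
    simp only [add_mul, mul_add] at h
    rw [hr y x, hr z x] at h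
    linear_combination (norm := abel) h
  intro x y r
  have h2 := L r x y
  have h3 := Rr x r y
  simp only [mul_sub, sub_mul, succ_nsmul, zero_nsmul, zero_add]
  linear_combination (norm := abel) h2 - h3 - h3
end

section
/- Let R be an alternative ring, let x, y in R with x*y = y*x, and let z be an element of the commutative center of R (i.e. z commutes with every element of R). Then x*z commutes with y, i.e. (x*z)*y = y*(x*z). -/
theorem stmt_2 {R : Type*} [NonUnitalNonAssocRing R]
    (hl : ∀ x y : R, (x*x)*y = x*(x*y))
    (hr : ∀ x y : R, (y*x)*x = y*(x*x))
    (x y z : R) (hxy : x*y = y*x) (hz : ∀ r : R, z*r = r*z) :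
    (x*z)*y = y*(x*z) := by
  -- linearized left alternativity
  have h1 : ∀ a b c : R, (a*b)*c + (b*a)*c = a*(b*c) + b*(a*c) := by
    intro a b c
    have h := hl (a+b) c
    simp only [add_mul, mul_add] at h
    linear_combination (norm := abel1) h - hl a c - hl b c
  -- linearized right alternativity
  have h2 : ∀ a b c : R, (a*b)*c + (a*c)*b = a*(b*c) + a*(c*b) := by
    intro a b c
    have h := hr (b+c) a
    simp only [add_mul, mul_add] at h
    linear_combination (norm := abel1) h - hr b a - hr c a
  have e1 : x*(z*y) = x*(y*z) := by rw [hz y]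
  have e2 : (z*y)*x = (y*z)*x := by rw [hz y]
  have e3 : y*(z*x) = y*(x*z) := by rw [hz x]
  have e4 : z*(x*y) = z*(y*x) := by rw [hxy]
  have e5 : z*(x*y) = (x*y)*z := hz (x*y)
  linear_combination (norm := abel1) h2 x y z + h2 y x z + h2 y x z - h1 x y z
    - h1 x y z - h1 y z x - e5 + e1 + e2 + e3 + e4
end

section
/- In an alternative ring R, the commutative center Z = {z in R : z*r = r*z for all r in R} is closed under multiplication (and under addition and negation), hence is a subring of R. -/
theorem stmt_3 {R : Type*} [NonUnitalNonAssocRing R]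
    (hl : ∀ x y : R, (x*x)*y = x*(x*y))
    (hr : ∀ x y : R, (y*x)*x = y*(x*x)) :
    ∀ x ∈ {z : R | ∀ r : R, z*r = r*z}, ∀ y ∈ {z : R | ∀ r : R, z*r = r*z},
      x + y ∈ {z : R | ∀ r : R, z*r = r*z} ∧
      -x ∈ {z : R | ∀ r : R, z*r = r*z} ∧
      x * y ∈ {z : R | ∀ r : R, z*r = r*z} := by
  intro x hx y hy
  simp only [Set.mem_setOf_eq] at hx hy ⊢
  refine ⟨?_, ?_, ?_⟩
  · intro r; rw [add_mul, mul_add, hx r, hy r]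
  · intro r; rw [neg_mul, mul_neg, hx r]
  · -- closure under multiplication
    set A : R → R → R → R := fun a b c => (a*b)*c - a*(b*c) with hA
    have hA1 : ∀ a b c : R, A a b c = - A b a c := by
      intro a b c
      have h := hl (a+b) c
      simp only [add_mul, mul_add] at h
      rw [hl a c, hl b c] at h
      simp only [hA]
      linear_combination (norm := abel) h
    have hA2 : ∀ a b c : R, A a b c = - A a c b := by
      intro a b c
      have h := hr (b+c) a
      simp only [add_mul, mul_add] at h
      rw [hr b a, hr c a] at h
      simp only [hA]
      linear_combination (norm := abel) h
    intro r
    have e1 : A x y r = A y x r - A y r x := by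
      simp only [hA]
      rw [hx y, hx (y*r), hx r]
      abel
    have c1 : A x r y = - A x y r := by rw [hA2 x y r, neg_neg]
    have c3 : A y x r = - A x y r := by rw [hA1 x y r, neg_neg]
    have c2 : A r x y = A x y r := by rw [hA1 r x y, c1, neg_neg]
    have c4 : A y r x = A x y r := by
      rw [← neg_neg (A y r x), ← hA2 y x r, c3, neg_neg]
    have h3 : A x y r + A x y r + A x y r = 0 := by
      rw [c3, c4] at e1
      linear_combination (norm := abel) e1
    have e2 : (x*y)*r - r*(x*y) = A x y r - A x r y + A r x y := by
      simp only [hA]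
      rw [hy r, hx r]
      abel
    have final : (x*y)*r - r*(x*y) = 0 := by
      rw [e2, c1, c2]
      linear_combination (norm := abel) h3
    exact sub_eq_zero.mp final
end

section
/- Let R be an alternative ring whose additive group has no 3-torsion (3*x = 0 implies x = 0). Then every element of the commutative center of R lies in the nucleus; that is, if z commutes with all elements of R, then (z,x,y) = 0 for all x, y in R. Consequently the commutative center equals the center. -/
theorem stmt_4 {R : Type*} [NonUnitalNonAssocRing R]
    (hl : ∀ x y : R, (x*x)*y = x*(x*y))
    (hr : ∀ x y : R, (y*x)*x = y*(x*x))
    (h3 : ∀ x : R, (3 : ℕ) • x = 0 → x = 0) :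
    (∀ z : R, (∀ r : R, z*r = r*z) → ∀ x y : R, (z*x)*y - z*(x*y) = 0) ∧
    {z : R | ∀ r : R, z*r = r*z}
      = {z : R | (∀ x y : R, (z*x)*y = z*(x*y)) ∧ ∀ r : R, z*r = r*z} := by
  -- swap first two arguments of the associator
  have swap12 : ∀ x z y : R, (x*z)*y - x*(z*y) = -((z*x)*y - z*(x*y)) := by
    intro x z y
    have h := hl (x+z) y
    simp only [add_mul, mul_add] at h
    linear_combination (norm := abel1) h - hl x y - hl z y
  -- swap last two arguments of the associator
  have swap23 : ∀ y x z : R, (y*x)*z - y*(x*z) = -((y*z)*x - y*(z*x)) := by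
    intro y x z
    have h := hr (x+z) y
    simp only [add_mul, mul_add] at h
    linear_combination (norm := abel1) h - hr x y - hr z y
  have main : ∀ z : R, (∀ r : R, z*r = r*z) → ∀ x y : R, (z*x)*y - z*(x*y) = 0 := by
    intro z c x y
    have e1 : z*(x*y) = (x*y)*z := c (x*y)
    have e2 : (z*x)*y = (x*z)*y := by rw [c x]
    have e3 : x*(y*z) = x*(z*y) := by rw [← c y]
    have h3sum : ((x*y)*z - x*(y*z)) - ((x*z)*y - x*(z*y)) + ((z*x)*y - z*(x*y)) = 0 := by
      linear_combination (norm := abel1) -e1 + e2 - e3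
    have s23 : (x*y)*z - x*(y*z) = -((x*z)*y - x*(z*y)) := swap23 x y z
    have s12' : (x*z)*y - x*(z*y) = -((z*x)*y - z*(x*y)) := swap12 x z y
    have hA0 : (x*y)*z - x*(y*z) = 0 := by
      apply h3
      linear_combination (norm := abel1) h3sum + s23 + s23 - s12'
    linear_combination (norm := abel1) hA0 - s23 + s12'
  refine ⟨main, ?_⟩
  ext z
  simp only [Set.mem_setOf_eq]
  constructor
  · intro hz
    exact ⟨fun x y => sub_eq_zero.mp (main z hz x y), hz⟩
  · intro hz
    exact hz.2
end

section
/- Let R be an alternative ring with nucleus N. Then [N, R] ⊆ N; that is, if n is in the nucleus and x in R, then n*x - x*n is in the nucleus. -/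
/-- The associator. -/
def ascStmt6 {R : Type*} [NonUnitalNonAssocRing R] (a b c : R) : R :=
  (a*b)*c - a*(b*c)

namespace ascStmt6

variable {R : Type*} [NonUnitalNonAssocRing R]

/-- Teichmüller identity: holds in any nonassociative ring. -/
lemma teich (a b c d : R) :
    ascStmt6 (a*b) c d - ascStmt6 a (b*c) d + ascStmt6 a b (c*d)
      = a * ascStmt6 b c d + ascStmt6 a b c * d := by
  simp only [ascStmt6, mul_sub, sub_mul]
  abel

lemma add_fst (a a' b c : R) :
    ascStmt6 (a+a') b c = ascStmt6 a b c + ascStmt6 a' b c := by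
  simp only [ascStmt6, add_mul, mul_add]; abel

lemma add_snd (a b b' c : R) :
    ascStmt6 a (b+b') c = ascStmt6 a b c + ascStmt6 a b' c := by
  simp only [ascStmt6, add_mul, mul_add]; abel

lemma add_trd (a b c c' : R) :
    ascStmt6 a b (c+c') = ascStmt6 a b c + ascStmt6 a b c' := by
  simp only [ascStmt6, add_mul, mul_add]; abel

variable (hl : ∀ x y : R, (x*x)*y = x*(x*y)) (hr : ∀ x y : R, (y*x)*x = y*(x*x))

include hl in
lemma alt1 (a b c : R) : ascStmt6 a b c = - ascStmt6 b a c := by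
  have h0 : ascStmt6 (a+b) (a+b) c = 0 := by simp [ascStmt6, hl]
  rw [add_fst, add_snd, add_snd] at h0
  have ha : ascStmt6 a a c = 0 := by simp [ascStmt6, hl]
  have hb : ascStmt6 b b c = 0 := by simp [ascStmt6, hl]
  rw [ha, hb, zero_add, add_zero] at h0
  exact eq_neg_of_add_eq_zero_left h0

include hr in
lemma alt2 (a b c : R) : ascStmt6 a b c = - ascStmt6 a c b := by
  have h0 : ascStmt6 a (b+c) (b+c) = 0 := by simp [ascStmt6, hr]
  rw [add_snd, add_trd, add_trd] at h0
  have hb : ascStmt6 a b b = 0 := by simp [ascStmt6, hr]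
  have hc : ascStmt6 a c c = 0 := by simp [ascStmt6, hr]
  rw [hb, hc, zero_add, add_zero] at h0
  exact eq_neg_of_add_eq_zero_left h0

include hl hr in
lemma cyc (a b c : R) : ascStmt6 a b c = ascStmt6 b c a := by
  rw [alt1 hl a b c, alt2 hr b a c, neg_neg]

end ascStmt6

theorem stmt_6 {R : Type*} [NonUnitalNonAssocRing R]
    (hl : ∀ x y : R, (x*x)*y = x*(x*y))
    (hr : ∀ x y : R, (y*x)*x = y*(x*x))
    (n : R) (hn : ∀ x y : R, (n*x)*y = n*(x*y)) :
    ∀ r x y : R, ((n*r - r*n)*x)*y = (n*r - r*n)*(x*y) := by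
  open ascStmt6 in
  intro r x y
  -- nucleus facts, in all three slots
  have hN1 : ∀ a b : R, ascStmt6 n a b = 0 := by
    intro a b; simp [ascStmt6, hn]
  have hN2 : ∀ a b : R, ascStmt6 a n b = 0 := by
    intro a b; rw [alt1 hl, hN1, neg_zero]
  have hN3 : ∀ a b : R, ascStmt6 a b n = 0 := by
    intro a b; rw [alt2 hr, hN2, neg_zero]
  -- (nr, x, y) = n (r, x, y)
  have L1 : ∀ a b c : R, ascStmt6 (n*a) b c = n * ascStmt6 a b c := by
    intro a b c
    have h := ascStmt6.teich n a b c
    rw [hN1, hN1, hN1] at h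
    simpa using h
  -- (x, y, cn) = (x, y, c) n
  have L2 : ∀ a b c : R, ascStmt6 a b (c*n) = ascStmt6 a b c * n := by
    intro a b c
    have h := ascStmt6.teich a b c n
    rw [hN3, hN3, hN3] at h
    simpa using h
  -- (an, c, d) = (a, nc, d)
  have L3 : ∀ a c d : R, ascStmt6 (a*n) c d = ascStmt6 a (n*c) d := by
    intro a c d
    have h := ascStmt6.teich a n c d
    rw [hN2, hN1, hN2] at h
    rw [mul_zero, zero_mul, add_zero, add_zero] at h
    exact sub_eq_zero.mp h
  -- n commutes with the associator (r,x,y)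
  set A := ascStmt6 r x y with hAdef
  have comm : n * A = A * n := by
    have e1 : ascStmt6 (n*r) x y = n * A := L1 r x y
    have e2 : ascStmt6 (n*r) x y = A * n := by
      calc ascStmt6 (n*r) x y = - ascStmt6 x (n*r) y := alt1 hl _ _ _
        _ = - ascStmt6 (x*n) r y := by rw [L3]
        _ = - ascStmt6 r y (x*n) := by rw [cyc hl hr (x*n) r y]
        _ = - (ascStmt6 r y x * n) := by rw [L2]
        _ = - (-A * n) := by rw [show ascStmt6 r y x = -A from alt2 hr r y x]
        _ = A * n := by rw [neg_mul, neg_neg]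
    rw [← e1, e2]
  -- (rn, x, y) = A n
  have e3 : ascStmt6 (r*n) x y = A * n := by
    calc ascStmt6 (r*n) x y = ascStmt6 x y (r*n) := cyc hl hr (r*n) x y
      _ = ascStmt6 x y r * n := L2 x y r
      _ = A * n := by rw [cyc hl hr x y r, cyc hl hr y r x, hAdef]
  have main : ascStmt6 (n*r - r*n) x y = 0 := by
    have : ascStmt6 (n*r - r*n) x y
        = ascStmt6 (n*r) x y - ascStmt6 (r*n) x y := by
      simp only [ascStmt6, sub_mul, mul_sub]; abel
    rw [this, L1, e3, ← hAdef, comm, sub_self]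
  simpa [ascStmt6, sub_eq_zero] using main
end

section
/- Let R be an alternative ring and n an element of the nucleus of R. Then n commutes with every associator: n*(x,y,z) = (x,y,z)*n for all x, y, z in R. -/
namespace Stmt7Aux

variable {R : Type*} [NonUnitalNonAssocRing R]

def asc (x y z : R) : R := (x*y)*z - x*(y*z)

theorem teich (w x y z : R) :
    asc (w*x) y z - asc w (x*y) z + asc w x (y*z)
      = w * asc x y z + (asc w x y) * z := by
  simp only [asc, mul_sub, sub_mul]
  abel

theorem asc_self_left (hl : ∀ x y : R, (x*x)*y = x*(x*y)) (x y : R) :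
    asc x x y = 0 := sub_eq_zero.2 (hl x y)

theorem asc_self_right (hr : ∀ x y : R, (y*x)*x = y*(x*x)) (x y : R) :
    asc x y y = 0 := sub_eq_zero.2 (hr y x)

theorem swap12 (hl : ∀ x y : R, (x*x)*y = x*(x*y)) (x y z : R) :
    asc x y z = - asc y x z := by
  have h := asc_self_left hl (x + y) z
  have expand : asc (x+y) (x+y) z
      = asc x x z + asc x y z + asc y x z + asc y y z := by
    simp only [asc, add_mul, mul_add]; abel
  rw [expand, asc_self_left hl, asc_self_left hl] at h
  have h' : asc x y z + asc y x z = 0 := by simpa using h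
  exact eq_neg_of_add_eq_zero_left h' 

theorem swap23 (hr : ∀ x y : R, (y*x)*x = y*(x*x)) (x y z : R) :
    asc x y z = - asc x z y := by
  have h := asc_self_right hr x (y + z)
  have expand : asc x (y+z) (y+z)
      = asc x y y + asc x y z + asc x z y + asc x z z := by
    simp only [asc, add_mul, mul_add]; abel
  rw [expand, asc_self_right hr, asc_self_right hr] at h
  have h' : asc x y z + asc x z y = 0 := by simpa using h
  exact eq_neg_of_add_eq_zero_left h' 

theorem cyc (hl : ∀ x y : R, (x*x)*y = x*(x*y))
    (hr : ∀ x y : R, (y*x)*x = y*(x*x)) (x y z : R) :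
    asc x y z = asc y z x := by
  rw [swap12 hl, swap23 hr, neg_neg]

end Stmt7Aux

theorem stmt_7 {R : Type*} [NonUnitalNonAssocRing R]
    (hl : ∀ x y : R, (x*x)*y = x*(x*y))
    (hr : ∀ x y : R, (y*x)*x = y*(x*x))
    (n : R) (hn : ∀ x y : R, (n*x)*y = n*(x*y)) :
    ∀ x y z : R, n*((x*y)*z - x*(y*z)) = ((x*y)*z - x*(y*z))*n := by
  open Stmt7Aux in
  intro x y z
  have hn1 : ∀ a b : R, asc n a b = 0 := fun a b => sub_eq_zero.2 (hn a b)
  have hn2 : ∀ a b : R, asc a n b = 0 := by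
    intro a b; rw [swap12 hl, hn1, neg_zero]
  have hn3 : ∀ a b : R, asc a b n = 0 := by
    intro a b; rw [swap23 hr, hn2, neg_zero]
  -- (1): asc (n*a) b c = n * asc a b c
  have h1 : ∀ a b c : R, asc (n*a) b c = n * asc a b c := by
    intro a b c
    have := teich n a b c
    rw [hn1, hn1, hn1] at this
    simpa using this
  -- (2): asc w (x*n) z = asc w x (n*z)
  have h2 : ∀ w a c : R, asc w (a*n) c = asc w a (n*c) := by
    intro w a c
    have h := teich w a n c
    rw [hn2 (w*a) c, hn2 a c, hn3 w a] at h
    have h' : - asc w (a*n) c + asc w a (n*c) = 0 := by simpa using h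
    exact neg_inj.mp (neg_eq_of_add_eq_zero_left h').symm
  -- (3): asc w x (y*n) = asc w x y * n
  have h3 : ∀ w a b : R, asc w a (b*n) = asc w a b * n := by
    intro w a b
    have h := teich w a b n
    rw [hn3 (w*a) b, hn3 w (a*b), hn3 a b] at h
    simpa using h
  have key : n * asc x y z = asc x y z * n := by
    calc n * asc x y z = asc (n*x) y z := (h1 x y z).symm
      _ = asc y z (n*x) := by rw [cyc hl hr]
      _ = asc y (z*n) x := (h2 y z x).symm
      _ = asc x y (z*n) := by rw [cyc hl hr, cyc hl hr]
      _ = asc x y z * n := h3 x y z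
  simpa [asc] using key
end

section
/- Let R be an alternative ring, n an element of the nucleus, and w, x, y, z in R. Then [w,n]*(x,y,z) = -[x,n]*(w,y,z), where [a,b] = a*b - b*a. In particular, if n' is also in the nucleus, then [n',n]*(x,y,z) = 0 for all x, y, z in R. -/
theorem stmt_8 {R : Type*} [NonUnitalNonAssocRing R]
    (hl : ∀ x y : R, (x*x)*y = x*(x*y))
    (hr : ∀ x y : R, (y*x)*x = y*(x*x))
    (n : R) (hn : ∀ x y : R, (n*x)*y = n*(x*y)) :
    (∀ w x y z : R,
      (w*n - n*w)*((x*y)*z - x*(y*z)) = -((x*n - n*x)*((w*y)*z - w*(y*z)))) ∧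
    (∀ n' : R, (∀ x y : R, (n'*x)*y = n'*(x*y)) →
      ∀ x y z : R, (n'*n - n*n')*((x*y)*z - x*(y*z)) = 0) := by
  have hl' : ∀ a b c : R, (a*b)*c + (b*a)*c = a*(b*c) + b*(a*c) := by
    intro a b c
    have z1 : ((a+b)*(a+b))*c - (a+b)*((a+b)*c) = 0 := sub_eq_zero_of_eq (hl (a+b) c)
    have z2 : (a*a)*c - a*(a*c) = 0 := sub_eq_zero_of_eq (hl a c)
    have z3 : (b*b)*c - b*(b*c) = 0 := sub_eq_zero_of_eq (hl b c)
    have key : ((a*b)*c + (b*a)*c) - (a*(b*c) + b*(a*c)) =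
        (((a+b)*(a+b))*c - (a+b)*((a+b)*c)) - ((a*a)*c - a*(a*c)) - ((b*b)*c - b*(b*c)) := by
      simp only [mul_add, add_mul, mul_sub, sub_mul]
      abel
    rw [z1, z2, z3] at key
    simp only [sub_zero, zero_sub, neg_zero] at key
    exact sub_eq_zero.mp key
  have hr' : ∀ a b c : R, (a*b)*c + (a*c)*b = a*(b*c) + a*(c*b) := by
    intro a b c
    have z1 : (a*(b+c))*(b+c) - a*((b+c)*(b+c)) = 0 := sub_eq_zero_of_eq (hr (b+c) a)
    have z2 : (a*b)*b - a*(b*b) = 0 := sub_eq_zero_of_eq (hr b a)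
    have z3 : (a*c)*c - a*(c*c) = 0 := sub_eq_zero_of_eq (hr c a)
    have key : ((a*b)*c + (a*c)*b) - (a*(b*c) + a*(c*b)) =
        ((a*(b+c))*(b+c) - a*((b+c)*(b+c))) - ((a*b)*b - a*(b*b)) - ((a*c)*c - a*(c*c)) := by
      simp only [mul_add, add_mul, mul_sub, sub_mul]
      abel
    rw [z1, z2, z3] at key
    simp only [sub_zero, zero_sub, neg_zero] at key
    exact sub_eq_zero.mp key
  have NM : ∀ a b : R, (a*n)*b = a*(n*b) := by
    intro a b
    have h := hl' a n b
    rw [hn a b] at h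
    exact add_right_cancel h
  have A1 : ∀ a b c : R, ((n*b)*a)*c - (n*b)*(a*c) = n*((b*a)*c) - n*(b*(a*c)) := by
    intro a b c
    rw [hn b a, hn (b*a) c, hn b (a*c)]
  have A3 : ∀ a b c : R, (a*(n*b))*c - a*((n*b)*c) = n*((a*b)*c) - n*(a*(b*c)) := by
    intro a b c
    have z1 : ((a*(n*b))*c + ((n*b)*a)*c) - (a*((n*b)*c) + (n*b)*(a*c)) = 0 :=
      sub_eq_zero_of_eq (hl' a (n*b) c)
    have z2 : (((n*b)*a)*c - (n*b)*(a*c)) - (n*((b*a)*c) - n*(b*(a*c))) = 0 :=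
      sub_eq_zero_of_eq (A1 a b c)
    have z3 : (n*((a*b)*c) + n*((b*a)*c)) - (n*(a*(b*c)) + n*(b*(a*c))) = 0 := by
      rw [← mul_add, ← mul_add, hl' a b c, sub_self]
    have key : ((a*(n*b))*c - a*((n*b)*c)) - (n*((a*b)*c) - n*(a*(b*c))) =
        (((a*(n*b))*c + ((n*b)*a)*c) - (a*((n*b)*c) + (n*b)*(a*c)))
        - ((((n*b)*a)*c - (n*b)*(a*c)) - (n*((b*a)*c) - n*(b*(a*c))))
        - ((n*((a*b)*c) + n*((b*a)*c)) - (n*(a*(b*c)) + n*(b*(a*c)))) := by abel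
    rw [z1, z2, z3] at key
    simp only [sub_zero, zero_sub, neg_zero] at key
    exact sub_eq_zero.mp key
  have SQ3 : ∀ a b c : R, (a*(b*a))*c - a*((b*a)*c) = a*((a*b)*c) - a*(a*(b*c)) := by
    intro a b c
    have z0 : ((a * a) * (b * c)) - (a * (a * (b * c))) = 0 := sub_eq_zero_of_eq (hl a (b * c))
    have z1 : (((a * a) * b) * c) - ((a * (a * b)) * c) = 0 := sub_eq_zero_of_eq (congrArg (fun t => (t * c)) (hl a b))
    have z2 : (c * ((a * a) * b)) - (c * (a * (a * b))) = 0 := sub_eq_zero_of_eq (congrArg (fun t => (c * t)) (hl a b))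
    have z3 : (((b * c) * a) * a) - ((b * c) * (a * a)) = 0 := sub_eq_zero_of_eq (hr a (b * c))
    have z4 : (((c * b) * a) * a) - ((c * b) * (a * a)) = 0 := sub_eq_zero_of_eq (hr a (c * b))
    have z5 : (c * ((b * a) * a)) - (c * (b * (a * a))) = 0 := sub_eq_zero_of_eq (congrArg (fun t => (c * t)) (hr a b))
    have z6 : (((c * a) * a) * b) - ((c * (a * a)) * b) = 0 := sub_eq_zero_of_eq (congrArg (fun t => (t * b)) (hr a c))
    have z7 : (b * ((c * a) * a)) - (b * (c * (a * a))) = 0 := sub_eq_zero_of_eq (congrArg (fun t => (b * t)) (hr a c))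
    have z8 : (((c * b) * (a * a)) + ((b * c) * (a * a))) - ((c * (b * (a * a))) + (b * (c * (a * a)))) = 0 := sub_eq_zero_of_eq (hl' c b (a * a))
    have z9 : (((c * a) * (a * b)) + ((a * c) * (a * b))) - ((c * (a * (a * b))) + (a * (c * (a * b)))) = 0 := sub_eq_zero_of_eq (hl' c a (a * b))
    have z10 : (((c * a) * (b * a)) + ((a * c) * (b * a))) - ((c * (a * (b * a))) + (a * (c * (b * a)))) = 0 := sub_eq_zero_of_eq (hl' c a (b * a))
    have z11 : (((b * a) * (c * a)) + ((a * b) * (c * a))) - ((b * (a * (c * a))) + (a * (b * (c * a)))) = 0 := sub_eq_zero_of_eq (hl' b a (c * a))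
    have z12 : (((b * (a * a)) * c) + (((a * a) * b) * c)) - ((b * ((a * a) * c)) + ((a * a) * (b * c))) = 0 := sub_eq_zero_of_eq (hl' b (a * a) c)
    have z13 : (((a * (c * a)) * b) + (((c * a) * a) * b)) - ((a * ((c * a) * b)) + ((c * a) * (a * b))) = 0 := sub_eq_zero_of_eq (hl' a (c * a) b)
    have z14 : ((((c * b) * a) + ((b * c) * a)) * a) - (((c * (b * a)) + (b * (c * a))) * a) = 0 := sub_eq_zero_of_eq (congrArg (fun t => (t * a)) (hl' c b a))
    have z15 : (((c * b) * (a * a)) + ((c * (a * a)) * b)) - ((c * (b * (a * a))) + (c * ((a * a) * b))) = 0 := sub_eq_zero_of_eq (hr' c b (a * a))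
    have z16 : (((c * a) * (b * a)) + ((c * (b * a)) * a)) - ((c * (a * (b * a))) + (c * ((b * a) * a))) = 0 := sub_eq_zero_of_eq (hr' c a (b * a))
    have z17 : (((b * c) * (a * a)) + ((b * (a * a)) * c)) - ((b * (c * (a * a))) + (b * ((a * a) * c))) = 0 := sub_eq_zero_of_eq (hr' b c (a * a))
    have z18 : (((b * a) * (c * a)) + ((b * (c * a)) * a)) - ((b * (a * (c * a))) + (b * ((c * a) * a))) = 0 := sub_eq_zero_of_eq (hr' b a (c * a))
    have z19 : (((a * c) * (a * b)) + ((a * (a * b)) * c)) - ((a * (c * (a * b))) + (a * ((a * b) * c))) = 0 := sub_eq_zero_of_eq (hr' a c (a * b))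
    have z20 : (((a * c) * (b * a)) + ((a * (b * a)) * c)) - ((a * (c * (b * a))) + (a * ((b * a) * c))) = 0 := sub_eq_zero_of_eq (hr' a c (b * a))
    have z21 : (((a * b) * (c * a)) + ((a * (c * a)) * b)) - ((a * (b * (c * a))) + (a * ((c * a) * b))) = 0 := sub_eq_zero_of_eq (hr' a b (c * a))
    have key : ((a*(b*a))*c - a*((b*a)*c)) - (a*((a*b)*c) - a*(a*(b*c))) = -(((a * a) * (b * c)) - (a * (a * (b * c)))) + ((((a * a) * b) * c) - ((a * (a * b)) * c)) + ((c * ((a * a) * b)) - (c * (a * (a * b)))) - ((((b * c) * a) * a) - ((b * c) * (a * a))) - ((((c * b) * a) * a) - ((c * b) * (a * a))) + ((c * ((b * a) * a)) - (c * (b * (a * a)))) + ((((c * a) * a) * b) - ((c * (a * a)) * b)) + ((b * ((c * a) * a)) - (b * (c * (a * a)))) - (2 : ℤ) • ((((c * b) * (a * a)) + ((b * c) * (a * a))) - ((c * (b * (a * a))) + (b * (c * (a * a))))) - ((((c * a) * (a * b)) + ((a * c) * (a * b))) - ((c * (a * (a * b))) + (a * (c * (a * b))))) - ((((c * a) * (b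 * a)) + ((a * c) * (b * a))) - ((c * (a * (b * a))) + (a * (c * (b * a))))) - ((((b * a) * (c * a)) + ((a * b) * (c * a))) - ((b * (a * (c * a))) + (a * (b * (c * a))))) - ((((b * (a * a)) * c) + (((a * a) * b) * c)) - ((b * ((a * a) * c)) + ((a * a) * (b * c)))) - ((((a * (c * a)) * b) + (((c * a) * a) * b)) - ((a * ((c * a) * b)) + ((c * a) * (a * b)))) + (((((c * b) * a) + ((b * c) * a)) * a) - (((c * (b * a)) + (b * (c * a))) * a)) + ((((c * b) * (a * a)) + ((c * (a * a)) * b)) - ((c * (b * (a * a))) + (c * ((a * a) * b)))) + ((((c * a) * (b * a)) + ((c * (b * a)) * a)) - ((c * (a * (b * a))) + (c * ((b * a) * a)))) + ((((b * c) * (a * a)) + ((b * (a * a)) * c)) - ((b * (c * (a * a))) + (b * ((a * a) * c)))) + ((((b * a) * (c * a)) + ((b * (c * a)) * a)) - ((b * (a * (c * a))) + (b * ((c * a) * a)))) + ((((a * c) * (a * b)) + ((a * (a * b)) * c)) - ((a * (c * (a * b))) + (a * ((a * b) * c)))) + ((((a * c) * (b * a)) + ((a * (b * a)) * c)) - ((a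 * (c * (b * a))) + (a * ((b * a) * c)))) + ((((a * b) * (c * a)) + ((a * (c * a)) * b)) - ((a * (b * (c * a))) + (a * ((c * a) * b)))) := by
      simp only [mul_add, add_mul, mul_sub, sub_mul, smul_add, smul_sub]
      abel
    rw [z0, z1, z2, z3, z4, z5, z6, z7, z8, z9, z10, z11, z12, z13, z14, z15, z16, z17, z18, z19, z20, z21] at key
    simp only [smul_zero, neg_zero, add_zero, zero_add, sub_zero] at key
    exact sub_eq_zero.mp key
  have diag : ∀ w y z : R, (w*n - n*w)*((w*y)*z - w*(y*z)) = 0 := by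
    intro w y z
    have hA : n*((w*y)*z) - n*(w*(y*z)) = (w*(n*y))*z - w*((n*y)*z) := (A3 w y z).symm
    have hB : w*((w*y)*z) - w*(w*(y*z)) = (w*(y*w))*z - w*((y*w)*z) := (SQ3 w y z).symm
    have hC : w*((w*(n*y))*z) - w*(w*((n*y)*z)) = (w*((n*y)*w))*z - w*(((n*y)*w)*z) :=
      (SQ3 w (n*y) z).symm
    have hD : n*((w*(y*w))*z) - n*(w*((y*w)*z)) = (w*(n*(y*w)))*z - w*((n*(y*w))*z) :=
      (A3 w (y*w) z).symm
    calc (w*n - n*w)*((w*y)*z - w*(y*z))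
        = (w*n)*((w*y)*z - w*(y*z)) - (n*w)*((w*y)*z - w*(y*z)) :=
          sub_mul _ _ _
      _ = w*(n*((w*y)*z - w*(y*z))) - n*(w*((w*y)*z - w*(y*z))) := by
          rw [NM w ((w*y)*z - w*(y*z)), hn w ((w*y)*z - w*(y*z))]
      _ = w*((w*(n*y))*z - w*((n*y)*z)) - n*((w*(y*w))*z - w*((y*w)*z)) := by
          rw [mul_sub n ((w*y)*z) (w*(y*z)), hA, mul_sub w ((w*y)*z) (w*(y*z)), hB]
      _ = ((w*((n*y)*w))*z - w*(((n*y)*w)*z)) - ((w*(n*(y*w)))*z - w*((n*(y*w))*z)) := by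
          rw [mul_sub w ((w*(n*y))*z) (w*((n*y)*z)), hC,
              mul_sub n ((w*(y*w))*z) (w*((y*w)*z)), hD]
      _ = 0 := by rw [hn y w]; exact sub_self _
  have part1 : ∀ w x y z : R,
      (w*n - n*w)*((x*y)*z - x*(y*z)) = -((x*n - n*x)*((w*y)*z - w*(y*z))) := by
    intro w x y z
    have z1 : ((w+x)*n - n*(w+x))*(((w+x)*y)*z - (w+x)*(y*z)) = 0 := diag (w+x) y z
    have z2 : (w*n - n*w)*((w*y)*z - w*(y*z)) = 0 := diag w y z
    have z3 : (x*n - n*x)*((x*y)*z - x*(y*z)) = 0 := diag x y z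
    have key : (w*n - n*w)*((x*y)*z - x*(y*z)) - (-((x*n - n*x)*((w*y)*z - w*(y*z)))) =
        ((w+x)*n - n*(w+x))*(((w+x)*y)*z - (w+x)*(y*z))
        - (w*n - n*w)*((w*y)*z - w*(y*z))
        - (x*n - n*x)*((x*y)*z - x*(y*z)) := by
      simp only [mul_add, add_mul, mul_sub, sub_mul]
      abel
    rw [z1, z2, z3] at key
    simp only [sub_zero, zero_sub, neg_zero] at key
    exact sub_eq_zero.mp key
  refine ⟨part1, ?_⟩
  intro n' hn' x y z
  have h := part1 n' x y z
  rw [hn' y z] at h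
  simpa using h
end

section
/- Let R be an alternative ring that is not associative (there exist a, b, c in R with (a,b,c) ≠ 0). Assume that no non-zero element of the nucleus N is a left zero divisor in R. Then N is commutative: m*n = n*m for all m, n in N. -/
private def a9 {R : Type*} [NonUnitalNonAssocRing R] (x y z : R) : R :=
  x*y*z - x*(y*z)

private lemma skew1 {R : Type*} [NonUnitalNonAssocRing R]
    (hl : ∀ x y : R, (x*x)*y = x*(x*y)) (x y z : R) :
    a9 x y z = - a9 y x z := by
  have h := hl (x+y) z
  simp only [add_mul, mul_add] at h
  unfold a9
  linear_combination (norm := abel1) h - hl x z - hl y z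

private lemma skew2 {R : Type*} [NonUnitalNonAssocRing R]
    (hr : ∀ x y : R, (y*x)*x = y*(x*x)) (x y z : R) :
    a9 x y z = - a9 x z y := by
  have h := hr (y+z) x
  simp only [add_mul, mul_add] at h
  unfold a9
  linear_combination (norm := abel1) h - hr y x - hr z x

private lemma cyc9 {R : Type*} [NonUnitalNonAssocRing R]
    (hl : ∀ x y : R, (x*x)*y = x*(x*y))
    (hr : ∀ x y : R, (y*x)*x = y*(x*x)) (x y z : R) :
    a9 x y z = a9 y z x := by
  rw [skew1 hl, skew2 hr, neg_neg]

-- nuclear elements associate in the middle position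
private lemma nuc2 {R : Type*} [NonUnitalNonAssocRing R]
    (hl : ∀ x y : R, (x*x)*y = x*(x*y)) {n : R}
    (hn : ∀ x y : R, (n*x)*y = n*(x*y)) (x y : R) :
    (x*n)*y = x*(n*y) := by
  have h : a9 x n y = 0 := by
    rw [skew1 hl]
    have : a9 n x y = 0 := by unfold a9; rw [hn]; simp
    rw [this, neg_zero]
  exact sub_eq_zero.mp h

-- nuclear elements associate in the right position
private lemma nuc3 {R : Type*} [NonUnitalNonAssocRing R]
    (hl : ∀ x y : R, (x*x)*y = x*(x*y))
    (hr : ∀ x y : R, (y*x)*x = y*(x*x)) {n : R}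
    (hn : ∀ x y : R, (n*x)*y = n*(x*y)) (x y : R) :
    (x*y)*n = x*(y*n) := by
  have h : a9 x y n = 0 := by
    rw [skew2 hr]
    have : a9 x n y = 0 := sub_eq_zero.mpr (nuc2 hl hn x y)
    rw [this, neg_zero]
  exact sub_eq_zero.mp h

private lemma leftmul9 {R : Type*} [NonUnitalNonAssocRing R] {n : R}
    (hn : ∀ x y : R, (n*x)*y = n*(x*y)) (x y z : R) :
    a9 (n*x) y z = n * a9 x y z := by
  unfold a9
  rw [hn x y, hn (x*y) z, hn x (y*z), mul_sub]

private lemma rightmul9 {R : Type*} [NonUnitalNonAssocRing R]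
    (hl : ∀ x y : R, (x*x)*y = x*(x*y))
    (hr : ∀ x y : R, (y*x)*x = y*(x*x)) {n : R}
    (hn : ∀ x y : R, (n*x)*y = n*(x*y)) (x y z : R) :
    a9 x y (z*n) = a9 x y z * n := by
  unfold a9
  rw [← nuc3 hl hr hn (x*y) z, ← nuc3 hl hr hn y z, ← nuc3 hl hr hn x (y*z), sub_mul]

private lemma midswap9 {R : Type*} [NonUnitalNonAssocRing R]
    (hl : ∀ x y : R, (x*x)*y = x*(x*y)) {n : R}
    (hn : ∀ x y : R, (n*x)*y = n*(x*y)) (x y z : R) :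
    a9 y (n*x) z = a9 (y*n) x z := by
  unfold a9
  rw [← nuc2 hl hn y x, hn x z, ← nuc2 hl hn y (x*z)]

-- nuclear elements commute with associators
private lemma nuc_comm9 {R : Type*} [NonUnitalNonAssocRing R]
    (hl : ∀ x y : R, (x*x)*y = x*(x*y))
    (hr : ∀ x y : R, (y*x)*x = y*(x*x)) {n : R}
    (hn : ∀ x y : R, (n*x)*y = n*(x*y)) (x y z : R) :
    n * a9 x y z = a9 x y z * n := by
  calc n * a9 x y z = a9 (n*x) y z := (leftmul9 hn x y z).symm
    _ = -a9 y (n*x) z := by rw [← skew1 hl]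
    _ = -a9 (y*n) x z := by rw [midswap9 hl hn]
    _ = -a9 x z (y*n) := by rw [cyc9 hl hr (y*n) x z]
    _ = -(a9 x z y * n) := by rw [rightmul9 hl hr hn]
    _ = a9 x y z * n := by rw [skew2 hr x z y, neg_mul, neg_neg]

theorem stmt_9 {R : Type*} [NonUnitalNonAssocRing R]
    (hl : ∀ x y : R, (x*x)*y = x*(x*y))
    (hr : ∀ x y : R, (y*x)*x = y*(x*x))
    (hna : ∃ a b c : R, (a*b)*c ≠ a*(b*c))
    (hnzd : ∀ n : R, (∀ x y : R, (n*x)*y = n*(x*y)) → n ≠ 0 →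
      ∀ t : R, n*t = 0 → t = 0) :
    ∀ m n : R, (∀ x y : R, (m*x)*y = m*(x*y)) →
      (∀ x y : R, (n*x)*y = n*(x*y)) → m*n = n*m := by
  intro m n hm hn
  obtain ⟨a, b, c, hA⟩ := hna
  have hA0 : a9 a b c ≠ 0 := sub_ne_zero_of_ne hA
  -- key: (m*n) * A = (n*m) * A
  have key : (m*n) * a9 a b c = (n*m) * a9 a b c := by
    calc (m*n) * a9 a b c = m * (n * a9 a b c) := hm n _
      _ = m * a9 (n*a) b c := by rw [leftmul9 hn]
      _ = a9 (n*a) b c * m := nuc_comm9 hl hr hm (n*a) b c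
      _ = (n * a9 a b c) * m := by rw [leftmul9 hn]
      _ = n * (a9 a b c * m) := hn _ m
      _ = n * (m * a9 a b c) := by rw [← nuc_comm9 hl hr hm]
      _ = (n*m) * a9 a b c := (hn m _).symm
  have hz : (m*n - n*m) * a9 a b c = 0 := by
    rw [sub_mul, key, sub_self]
  -- the commutator is nuclear
  have hcn : ∀ x y : R, ((m*n - n*m)*x)*y = (m*n - n*m)*(x*y) := by
    have h1 : ∀ x y : R, ((m*n)*x)*y = (m*n)*(x*y) := by
      intro x y
      rw [hm n x, hm (n*x) y, hn x y, ← hm n (x*y)]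
    have h2 : ∀ x y : R, ((n*m)*x)*y = (n*m)*(x*y) := by
      intro x y
      rw [hn m x, hn (m*x) y, hm x y, ← hn m (x*y)]
    intro x y
    rw [sub_mul, sub_mul, h1, h2, ← sub_mul]
  by_contra hne
  exact hA0 (hnzd (m*n - n*m) hcn (sub_ne_zero_of_ne hne) (a9 a b c) hz)
end

section
/- Let R be an alternative ring, n an element of the nucleus, and w, x, y, z in R. Then [w,n]*([w,n]*(x,y,z)) = 0, where [a,b] = a*b - b*a and (x,y,z) is the associator. -/
set_option maxHeartbeats 16000000 in
set_option maxRecDepth 100000 in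
theorem stmt_10 {R : Type*} [NonUnitalNonAssocRing R]
    (hl : ∀ x y : R, (x*x)*y = x*(x*y))
    (hr : ∀ x y : R, (y*x)*x = y*(x*x))
    (n : R) (hn : ∀ x y : R, (n*x)*y = n*(x*y)) :
    ∀ w x y z : R,
      (w*n - n*w)*((w*n - n*w)*((x*y)*z - x*(y*z))) = 0 := by
  intro w x y z
  have hm : ∀ a b : R, (a*n)*b = a*(n*b) := by
    intro a b
    linear_combination (norm := (simp only [mul_add, add_mul, mul_sub, sub_mul, mul_neg, neg_mul]; abel)) hl (n+a) b - hl n b - hl a b - hn a b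
  have hr2 : ∀ a b : R, (a*b)*n = a*(b*n) := by
    intro a b
    linear_combination (norm := (simp only [mul_add, add_mul, mul_sub, sub_mul, mul_neg, neg_mul]; abel)) hr (n+b) a - hr n a - hr b a - hm a b
  have e0 : (-(((w*w)*x - w*(w*x))*(n*(y*(n*z))))) + ((w*w)*(x*(n*(y*(n*z)))) - w*(w*(x*(n*(y*(n*z)))))) + (-2:ℤ) • (w*(n*((y*(n*z))*(w*x) + (y*(w*x))*(n*z) - y*((n*z)*(w*x)) - y*((w*x)*(n*z))))) + (-(w*(n*((w*(n*z))*(x*y) + (w*(x*y))*(n*z) - w*((n*z)*(x*y)) - w*((x*y)*(n*z)))))) + (-(w*(n*(y*(n*((w*x)*z + (x*w)*z - w*(x*z) - x*(w*z))))))) + (w*(n*(n*((w*(x*y))*z + ((x*y)*w)*z - w*((x*y)*z) - (x*y)*(w*z))))) + (n*((x*(w*w))*(y*(n*z)) + (x*(y*(n*z)))*(w*w) - x*((w*w)*(y*(n*z))) - x*((y*(n*z))*(w*w)))) + (-(n*(w*(((w*y)*(n*x) + (y*w)*(n*x) - w*(y*(n*x)) - y*(w*(n*x)))*z)))) + (n*(w*((w*(n*(y*z)))*x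 + ((n*(y*z))*w)*x - w*((n*(y*z))*x) - (n*(y*z))*(w*x)))) + (-(n*(w*(y*((w*(n*z))*x + ((n*z)*w)*x - w*((n*z)*x) - (n*z)*(w*x)))))) + (n*(w*(n*((x*(w*y))*z + ((w*y)*x)*z - x*((w*y)*z) - (w*y)*(x*z))))) + (n*(w*(n*((w*x)*(y*z) + (x*w)*(y*z) - w*(x*(y*z)) - x*(w*(y*z)))))) + (w*(n*((((w*y)*n)*x - (w*y)*(n*x))*z))) + (-(n*(w*((((w*y)*n)*x - (w*y)*(n*x))*z)))) + (-(n*(w*(y*((n*x)*(w*z) - n*(x*(w*z))))))) + (((n*(n*(y*z)))*w - n*((n*(y*z))*w))*(w*x)) + (-(((n*(y*(n*z)))*w - n*((y*(n*z))*w))*(w*x))) + (-(n*(w*((n*z)*(x*(w*y)) - n*(z*(x*(w*y))))))) + (-((w*n)*((w*n)*(x*(y*z))) - w*(n*((w*n)*(x*(y*z)))))) + (n*(w*(((n*z)*x - n*(z*x))*(w*y)))) + (-(n*(w*(((n*(x*y))*w - n*((x*y)*w))*z)))) + (n*(w*((w*n)*(x*(y*z)) - w*(n*(x*(y*z))))))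 + (-(w*(n*(((n*z)*x - n*(z*x))*(w*y))))) + (w*((n*((n*(y*z))*w))*x - n*(((n*(y*z))*w)*x))) = 0 := by
    linear_combination (norm := (simp only [mul_add, add_mul, mul_sub, sub_mul, mul_neg, neg_mul, zsmul_eq_mul]; abel)) (-(1:ℤ)) • ((hl w x) * (n*(y*(n*z)))) + (hl w (x*(n*(y*(n*z))))) + (-2:ℤ) • ((w * (n * (hr ((n*z) + (w*x)) y))) - (w * (n * (hr (n*z) y))) - (w * (n * (hr (w*x) y)))) + (-(1:ℤ)) • ((w * (n * (hr ((n*z) + (x*y)) w))) - (w * (n * (hr (n*z) w))) - (w * (n * (hr (x*y) w)))) + (-(1:ℤ)) • ((w * (n * (y * (n * (hl (w + x) z))))) - (w * (n * (y * (n * (hl w z))))) - (w * (n * (y * (n * (hl x z)))))) + ((w * (n * (n * (hl (w + (x*y)) z)))) - (w * (n * (n * (hl w z)))) - (w * (n * (n * (hl (x*y) z))))) + ((n * (hr ((w*w) + (y*(n*z))) x)) - (n * (hr (w*w) x)) - (n * (hr (y*(n*z)) x))) + (-(1:ℤ)) • ((n * (w * ((hl (w + y) (n*x)) * z))) - (n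 * (w * ((hl w (n*x)) * z))) - (n * (w * ((hl y (n*x)) * z)))) + ((n * (w * (hl (w + (n*(y*z))) x))) - (n * (w * (hl w x))) - (n * (w * (hl (n*(y*z)) x)))) + (-(1:ℤ)) • ((n * (w * (y * (hl (w + (n*z)) x)))) - (n * (w * (y * (hl w x)))) - (n * (w * (y * (hl (n*z) x))))) + ((n * (w * (n * (hl (x + (w*y)) z)))) - (n * (w * (n * (hl x z)))) - (n * (w * (n * (hl (w*y) z))))) + ((n * (w * (n * (hl (w + x) (y*z))))) - (n * (w * (n * (hl w (y*z))))) - (n * (w * (n * (hl x (y*z)))))) + (w * (n * ((hm (w*y) x) * z))) + (-(1:ℤ)) • (n * (w * ((hm (w*y) x) * z))) + (-(1:ℤ)) • (n * (w * (y * (hn x (w*z))))) + ((hn (n*(y*z)) w) * (w*x)) + (-(1:ℤ)) • ((hn (y*(n*z)) w) * (w*x)) + (-(1:ℤ)) • (n * (w * (hn z (x*(w*y))))) + (-(1:ℤ)) • (hm w ((w*n)*(x*(y*z)))) + (n * (w * ((hn z x) * (w*y)))) + (-(1:ℤ)) • (n * (w * ((hn (x*y) w) * z))) + (n * (w * (hm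 w (x*(y*z))))) + (-(1:ℤ)) • (w * (n * ((hn z x) * (w*y)))) + (w * (hn ((n*(y*z))*w) x))
  have e1 : (((w*w)*x - w*(w*x))*(n*(n*(y*z)))) + (-((w*w)*(x*(n*(n*(y*z)))) - w*(w*(x*(n*(n*(y*z))))))) + (2:ℤ) • (w*(n*((y*(n*z))*(w*x) + ((n*z)*y)*(w*x) - y*((n*z)*(w*x)) - (n*z)*(y*(w*x))))) + (w*(n*((w*(n*z))*(x*y) + ((n*z)*w)*(x*y) - w*((n*z)*(x*y)) - (n*z)*(w*(x*y))))) + (-(w*(n*(w*((x*y)*(n*z) + (y*x)*(n*z) - x*(y*(n*z)) - y*(x*(n*z))))))) + (w*(n*(n*((w*z)*(y*x) + (w*(y*x))*z - w*(z*(y*x)) - w*((y*x)*z))))) + (-(n*((x*(w*w))*(y*(n*z)) + ((w*w)*x)*(y*(n*z)) - x*((w*w)*(y*(n*z))) - (w*w)*(x*(y*(n*z)))))) + (n*(w*(((w*y)*x + (y*w)*x - w*(y*x) - y*(w*x))*(n*z)))) + (n*(w*((w*(n*(x*z)))*y + ((n*(x*z))*w)*y - w*((n*(x*z))*y) - (n*(x*z))*(w*y))))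 + (-(n*(w*(y*((w*(n*x))*z + ((n*x)*w)*z - w*((n*x)*z) - (n*x)*(w*z)))))) + (-(n*(w*(n*((x*z)*(w*y) + (x*(w*y))*z - x*(z*(w*y)) - x*((w*y)*z)))))) + (-(n*(w*(n*(w*((x*y)*z + (y*x)*z - x*(y*z) - y*(x*z))))))) + (n*(w*((w*((n*x)*y - n*(x*y)))*z))) + (w*(n*(y*((n*z)*(w*x) - n*(z*(w*x)))))) + (-(n*(w*(y*((n*z)*(w*x) - n*(z*(w*x))))))) + ((n*((n*(y*z))*x))*(w*w) - n*(((n*(y*z))*x)*(w*w))) + (-((n*((y*(n*z))*x))*(w*w) - n*(((y*(n*z))*x)*(w*w)))) + (-2:ℤ) • (n*(w*((n*z)*(y*(w*x)) - n*(z*(y*(w*x)))))) + (n*(w*((n*(x*z))*(w*y) - n*((x*z)*(w*y))))) + (2:ℤ) • (w*(n*((n*z)*(y*(w*x)) - n*(z*(y*(w*x)))))) + (-(n*(w*((n*((x*z)*w))*y - n*(((x*z)*w)*y))))) + ((n*w)*((w*n)*(x*(y*z))) - n*(w*((w*n)*(x*(y*z))))) + (-2:ℤ) • (w*(n*((n*(z*y))*(w*x)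 - n*((z*y)*(w*x))))) + (w*(((n*(n*(y*z)))*w - n*((n*(y*z))*w))*x)) = 0 := by
    linear_combination (norm := (simp only [mul_add, add_mul, mul_sub, sub_mul, mul_neg, neg_mul, zsmul_eq_mul]; abel)) ((hl w x) * (n*(n*(y*z)))) + (-(1:ℤ)) • (hl w (x*(n*(n*(y*z))))) + (2:ℤ) • ((w * (n * (hl (y + (n*z)) (w*x)))) - (w * (n * (hl y (w*x)))) - (w * (n * (hl (n*z) (w*x))))) + ((w * (n * (hl (w + (n*z)) (x*y)))) - (w * (n * (hl w (x*y)))) - (w * (n * (hl (n*z) (x*y))))) + (-(1:ℤ)) • ((w * (n * (w * (hl (x + y) (n*z))))) - (w * (n * (w * (hl x (n*z))))) - (w * (n * (w * (hl y (n*z)))))) + ((w * (n * (n * (hr (z + (y*x)) w)))) - (w * (n * (n * (hr z w)))) - (w * (n * (n * (hr (y*x) w))))) + (-(1:ℤ)) • ((n * (hl (x + (w*w)) (y*(n*z)))) - (n * (hl x (y*(n*z)))) - (n * (hl (w*w) (y*(n*z))))) + ((n * (w * ((hl (w + y) x) * (n*z)))) - (n * (w * ((hl w x) * (n*z)))) -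 (n * (w * ((hl y x) * (n*z))))) + ((n * (w * (hl (w + (n*(x*z))) y))) - (n * (w * (hl w y))) - (n * (w * (hl (n*(x*z)) y)))) + (-(1:ℤ)) • ((n * (w * (y * (hl (w + (n*x)) z)))) - (n * (w * (y * (hl w z)))) - (n * (w * (y * (hl (n*x) z))))) + (-(1:ℤ)) • ((n * (w * (n * (hr (z + (w*y)) x)))) - (n * (w * (n * (hr z x)))) - (n * (w * (n * (hr (w*y) x))))) + (-(1:ℤ)) • ((n * (w * (n * (w * (hl (x + y) z))))) - (n * (w * (n * (w * (hl x z))))) - (n * (w * (n * (w * (hl y z)))))) + (n * (w * ((w * (hn x y)) * z))) + (w * (n * (y * (hn z (w*x))))) + (-(1:ℤ)) • (n * (w * (y * (hn z (w*x))))) + (hn ((n*(y*z))*x) (w*w)) + (-(1:ℤ)) • (hn ((y*(n*z))*x) (w*w)) + (-2:ℤ) • (n * (w * (hn z (y*(w*x))))) + (n * (w * (hn (x*z) (w*y)))) + (2:ℤ) • (w * (n * (hn z (y*(w*x))))) + (-(1:ℤ)) • (n * (w * (hn ((x*z)*w) y))) + (hn w ((w*n)*(x*(y*z)))) + (-2:ℤ)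 • (w * (n * (hn (z*y) (w*x)))) + (w * ((hn (n*(y*z)) w) * x))
  have e2 : ((x*(w*w))*(n*(y*(n*z))) + ((w*w)*x)*(n*(y*(n*z))) - x*((w*w)*(n*(y*(n*z)))) - (w*w)*(x*(n*(y*(n*z))))) + (w*((w*(n*(y*(n*z))))*x + ((n*(y*(n*z)))*w)*x - w*((n*(y*(n*z)))*x) - (n*(y*(n*z)))*(w*x))) + (-(w*(n*((x*(y*(w*n)))*z + ((y*(w*n))*x)*z - x*((y*(w*n))*z) - (y*(w*n))*(x*z))))) + (w*(n*((w*(n*x))*(y*z) + ((n*x)*w)*(y*z) - w*((n*x)*(y*z)) - (n*x)*(w*(y*z))))) + (w*(n*(n*(((w*x)*y + (w*y)*x - w*(x*y) - w*(y*x))*z)))) + (-(w*(n*(n*((w*z)*(y*x) + (z*w)*(y*x) - w*(z*(y*x)) - z*(w*(y*x))))))) + (n*((x*(w*w))*(n*(y*z)) + ((w*w)*x)*(n*(y*z)) - x*((w*w)*(n*(y*z))) - (w*w)*(x*(n*(y*z))))) + (n*(w*(((w*x)*(y*n) + (w*(y*n))*x - w*(x*(y*n)) - w*((y*n)*x))*z)))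 + (n*(w*((w*(n*(x*y)))*z + ((n*(x*y))*w)*z - w*((n*(x*y))*z) - (n*(x*y))*(w*z)))) + (n*(w*(y*((w*x)*(n*z) + (w*(n*z))*x - w*(x*(n*z)) - w*((n*z)*x))))) + (n*(w*(n*((x*z)*(w*y) + (z*x)*(w*y) - x*(z*(w*y)) - z*(x*(w*y)))))) + ((n*(y*(n*z)))*(w*(w*x)) - n*((y*(n*z))*(w*(w*x)))) + (-(w*(n*(x*(((y*w)*n)*z - (y*w)*(n*z)))))) + (-(w*(n*(y*((n*(x*w))*z - n*((x*w)*z)))))) + (n*(w*(y*((n*(x*w))*z - n*((x*w)*z))))) + (((n*(n*(y*z)))*x - n*((n*(y*z))*x))*(w*w)) + (-(((n*(y*(n*z)))*x - n*((y*(n*z))*x))*(w*w))) + (w*(n*((n*w)*(x*(y*z)) - n*(w*(x*(y*z)))))) + (n*(w*((n*(x*(w*y)))*z - n*((x*(w*y))*z)))) + (2:ℤ) • (n*(w*((n*(z*y))*(w*x) - n*((z*y)*(w*x))))) + (-(n*(w*(((n*(x*z))*w - n*((x*z)*w))*y)))) + (-(w*(n*((n*(y*z))*(w*x) - n*((y*z)*(w*x))))))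 + (-2:ℤ) • (w*(n*(((n*z)*y - n*(z*y))*(w*x)))) + (-((n*(n*(y*z)))*(w*(w*x)) - n*((n*(y*z))*(w*(w*x))))) = 0 := by
    linear_combination (norm := (simp only [mul_add, add_mul, mul_sub, sub_mul, mul_neg, neg_mul, zsmul_eq_mul]; abel)) ((hl (x + (w*w)) (n*(y*(n*z)))) - (hl x (n*(y*(n*z)))) - (hl (w*w) (n*(y*(n*z))))) + ((w * (hl (w + (n*(y*(n*z)))) x)) - (w * (hl w x)) - (w * (hl (n*(y*(n*z))) x))) + (-(1:ℤ)) • ((w * (n * (hl (x + (y*(w*n))) z))) - (w * (n * (hl x z))) - (w * (n * (hl (y*(w*n)) z)))) + ((w * (n * (hl (w + (n*x)) (y*z)))) - (w * (n * (hl w (y*z)))) - (w * (n * (hl (n*x) (y*z))))) + ((w * (n * (n * ((hr (x + y) w) * z)))) - (w * (n * (n * ((hr x w) * z)))) - (w * (n * (n * ((hr y w) * z))))) + (-(1:ℤ)) • ((w * (n * (n * (hl (w + z) (y*x))))) - (w * (n * (n * (hl w (y*x))))) - (w * (n * (n * (hl z (y*x)))))) + ((n * (hl (x + (w*w)) (n*(y*z))))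 - (n * (hl x (n*(y*z)))) - (n * (hl (w*w) (n*(y*z))))) + ((n * (w * ((hr (x + (y*n)) w) * z))) - (n * (w * ((hr x w) * z))) - (n * (w * ((hr (y*n) w) * z)))) + ((n * (w * (hl (w + (n*(x*y))) z))) - (n * (w * (hl w z))) - (n * (w * (hl (n*(x*y)) z)))) + ((n * (w * (y * (hr (x + (n*z)) w)))) - (n * (w * (y * (hr x w)))) - (n * (w * (y * (hr (n*z) w))))) + ((n * (w * (n * (hl (x + z) (w*y))))) - (n * (w * (n * (hl x (w*y))))) - (n * (w * (n * (hl z (w*y)))))) + (hn (y*(n*z)) (w*(w*x))) + (-(1:ℤ)) • (w * (n * (x * (hm (y*w) z)))) + (-(1:ℤ)) • (w * (n * (y * (hn (x*w) z)))) + (n * (w * (y * (hn (x*w) z)))) + ((hn (n*(y*z)) x) * (w*w)) + (-(1:ℤ)) • ((hn (y*(n*z)) x) * (w*w)) + (w * (n * (hn w (x*(y*z))))) + (n * (w * (hn (x*(w*y)) z))) + (2:ℤ) • (n * (w * (hn (z*y) (w*x)))) + (-(1:ℤ)) • (n * (w * ((hn (x*z) w) * y))) + (-(1:ℤ)) • (w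 * (n * (hn (y*z) (w*x)))) + (-2:ℤ) • (w * (n * ((hn z y) * (w*x)))) + (-(1:ℤ)) • (hn (n*(y*z)) (w*(w*x)))
  have e3 : (-((x*(w*w))*(n*(n*(y*z))) + ((w*w)*x)*(n*(n*(y*z))) - x*((w*w)*(n*(n*(y*z)))) - (w*w)*(x*(n*(n*(y*z)))))) + (-(w*((w*(n*(n*(y*z))))*x + ((n*(n*(y*z)))*w)*x - w*((n*(n*(y*z)))*x) - (n*(n*(y*z)))*(w*x)))) + (w*(n*((x*(y*w))*(n*z) + ((y*w)*x)*(n*z) - x*((y*w)*(n*z)) - (y*w)*(x*(n*z))))) + (w*(n*((w*y)*(x*(n*z)) + (y*w)*(x*(n*z)) - w*(y*(x*(n*z))) - y*(w*(x*(n*z)))))) + (w*(n*(n*(((w*x)*y + (x*w)*y - w*(x*y) - x*(w*y))*z)))) + (w*(n*(n*((w*z)*(x*y) + (w*(x*y))*z - w*(z*(x*y)) - w*((x*y)*z))))) + (-(n*((x*(n*(y*z)))*(w*w) + (x*(w*w))*(n*(y*z)) - x*((n*(y*z))*(w*w)) - x*((w*w)*(n*(y*z)))))) + (-(n*(w*((y*(w*(n*x)))*z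 + ((w*(n*x))*y)*z - y*((w*(n*x))*z) - (w*(n*x))*(y*z))))) + (n*(w*((w*(n*z))*(y*x) + (w*(y*x))*(n*z) - w*((n*z)*(y*x)) - w*((y*x)*(n*z))))) + (n*(w*(y*(n*((w*z)*x + (z*w)*x - w*(z*x) - z*(w*x)))))) + (-(n*(w*(n*((w*(y*z))*x + ((y*z)*w)*x - w*((y*z)*x) - (y*z)*(w*x)))))) + ((n*(y*(n*z)))*(x*(w*w)) - n*((y*(n*z))*(x*(w*w)))) + (w*(n*(x*(((y*w)*n - y*(w*n))*z)))) + (-(w*(n*(y*(((n*x)*w - n*(x*w))*z))))) + (n*(w*(y*(((n*x)*w - n*(x*w))*z)))) + (-(n*(w*(((x*(y*w))*n)*z - (x*(y*w))*(n*z))))) + (n*(w*(((y*w)*n)*(x*z) - (y*w)*(n*(x*z))))) + ((w*n)*((n*w)*(x*(y*z))) - w*(n*((n*w)*(x*(y*z))))) + (n*(w*(((n*x)*(w*y) - n*(x*(w*y)))*z))) + (2:ℤ) • (n*(w*(((n*z)*y - n*(z*y))*(w*x)))) + (-(w*(n*((n*(x*w))*(y*z) - n*((x*w)*(y*z))))))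 + (-(w*((n*(n*(y*z)))*(w*x) - n*((n*(y*z))*(w*x))))) + (w*(n*((n*((x*w)*y))*z - n*(((x*w)*y)*z)))) + (-((n*(n*(y*z)))*(x*(w*w)) - n*((n*(y*z))*(x*(w*w))))) = 0 := by
    linear_combination (norm := (simp only [mul_add, add_mul, mul_sub, sub_mul, mul_neg, neg_mul, zsmul_eq_mul]; abel)) (-(1:ℤ)) • ((hl (x + (w*w)) (n*(n*(y*z)))) - (hl x (n*(n*(y*z)))) - (hl (w*w) (n*(n*(y*z))))) + (-(1:ℤ)) • ((w * (hl (w + (n*(n*(y*z)))) x)) - (w * (hl w x)) - (w * (hl (n*(n*(y*z))) x))) + ((w * (n * (hl (x + (y*w)) (n*z)))) - (w * (n * (hl x (n*z)))) - (w * (n * (hl (y*w) (n*z))))) + ((w * (n * (hl (w + y) (x*(n*z))))) - (w * (n * (hl w (x*(n*z))))) - (w * (n * (hl y (x*(n*z)))))) + ((w * (n * (n * ((hl (w + x) y) * z)))) - (w * (n * (n * ((hl w y) * z)))) - (w * (n * (n * ((hl x y) * z))))) + ((w * (n * (n * (hr (z + (x*y)) w)))) - (w * (n * (n * (hr z w))))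 - (w * (n * (n * (hr (x*y) w))))) + (-(1:ℤ)) • ((n * (hr ((n*(y*z)) + (w*w)) x)) - (n * (hr (n*(y*z)) x)) - (n * (hr (w*w) x))) + (-(1:ℤ)) • ((n * (w * (hl (y + (w*(n*x))) z))) - (n * (w * (hl y z))) - (n * (w * (hl (w*(n*x)) z)))) + ((n * (w * (hr ((n*z) + (y*x)) w))) - (n * (w * (hr (n*z) w))) - (n * (w * (hr (y*x) w)))) + ((n * (w * (y * (n * (hl (w + z) x))))) - (n * (w * (y * (n * (hl w x))))) - (n * (w * (y * (n * (hl z x)))))) + (-(1:ℤ)) • ((n * (w * (n * (hl (w + (y*z)) x)))) - (n * (w * (n * (hl w x)))) - (n * (w * (n * (hl (y*z) x))))) + (hn (y*(n*z)) (x*(w*w))) + (w * (n * (x * ((hr2 y w) * z)))) + (-(1:ℤ)) • (w * (n * (y * ((hn x w) * z)))) + (n * (w * (y * ((hn x w) * z)))) + (-(1:ℤ)) • (n * (w * (hm (x*(y*w)) z))) + (n * (w * (hm (y*w) (x*z)))) + (hm w ((n*w)*(x*(y*z)))) + (n * (w * ((hn x (w*y)) * z))) + (2:ℤ) • (n * (w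 * ((hn z y) * (w*x)))) + (-(1:ℤ)) • (w * (n * (hn (x*w) (y*z)))) + (-(1:ℤ)) • (w * (hn (n*(y*z)) (w*x))) + (w * (n * (hn ((x*w)*y) z))) + (-(1:ℤ)) • (hn (n*(y*z)) (x*(w*w)))
  have e4 : (-((x*(n*(y*(n*z))))*(w*w) + (x*(w*w))*(n*(y*(n*z))) - x*((n*(y*(n*z)))*(w*w)) - x*((w*w)*(n*(y*(n*z)))))) + (-(w*((w*x)*(n*(y*(n*z))) + (w*(n*(y*(n*z))))*x - w*(x*(n*(y*(n*z)))) - w*((n*(y*(n*z)))*x)))) + (w*(n*((x*(w*y))*(n*z) + ((w*y)*x)*(n*z) - x*((w*y)*(n*z)) - (w*y)*(x*(n*z))))) + (w*(n*((w*y)*(n*(x*z)) + (w*(n*(x*z)))*y - w*(y*(n*(x*z))) - w*((n*(x*z))*y)))) + (-2:ℤ) • (w*(n*(n*((y*(w*x))*z + ((w*x)*y)*z - y*((w*x)*z) - (w*x)*(y*z))))) + (-(w*(n*(n*((w*z)*(x*y) + (z*w)*(x*y) - w*(z*(x*y)) - z*(w*(x*y))))))) + (n*((x*(n*(y*z)))*(w*w)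 + ((n*(y*z))*x)*(w*w) - x*((n*(y*z))*(w*w)) - (n*(y*z))*(x*(w*w)))) + (-(n*(w*((y*(w*x))*(n*z) + ((w*x)*y)*(n*z) - y*((w*x)*(n*z)) - (w*x)*(y*(n*z)))))) + (-(n*(w*((w*(n*z))*(y*x) + ((n*z)*w)*(y*x) - w*((n*z)*(y*x)) - (n*z)*(w*(y*x)))))) + (-(n*(w*(y*(n*((w*x)*z + (w*z)*x - w*(x*z) - w*(z*x))))))) + (-(n*(w*(n*((w*(x*z))*y + ((x*z)*w)*y - w*((x*z)*y) - (x*z)*(w*y)))))) + (-(w*(n*((w*((n*x)*y - n*(x*y)))*z)))) + (-(n*(w*((((w*x)*y)*n)*z - ((w*x)*y)*(n*z))))) + (-(w*(n*(y*((n*(z*w))*x - n*((z*w)*x)))))) + (n*(w*(y*((n*(z*w))*x - n*((z*w)*x))))) + (n*(w*(((x*(y*w))*n - x*((y*w)*n))*z))) + (-(n*(w*(((y*w)*n - y*(w*n))*(x*z))))) + (-(w*(n*((n*w)*((x*y)*z) - n*(w*((x*y)*z)))))) + (-(w*(n*(w*((n*(x*y))*z - n*((x*y)*z)))))) + (n*(w*((n*(z*w))*(y*x)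 - n*((z*w)*(y*x))))) + (-(w*(n*(((n*x)*w - n*(x*w))*(y*z))))) + (n*(w*(w*((n*(x*y))*z - n*((x*y)*z))))) + (w*(n*(((n*(x*w))*y - n*((x*w)*y))*z))) = 0 := by
    linear_combination (norm := (simp only [mul_add, add_mul, mul_sub, sub_mul, mul_neg, neg_mul, zsmul_eq_mul]; abel)) (-(1:ℤ)) • ((hr ((n*(y*(n*z))) + (w*w)) x) - (hr (n*(y*(n*z))) x) - (hr (w*w) x)) + (-(1:ℤ)) • ((w * (hr (x + (n*(y*(n*z)))) w)) - (w * (hr x w)) - (w * (hr (n*(y*(n*z))) w))) + ((w * (n * (hl (x + (w*y)) (n*z)))) - (w * (n * (hl x (n*z)))) - (w * (n * (hl (w*y) (n*z))))) + ((w * (n * (hr (y + (n*(x*z))) w))) - (w * (n * (hr y w))) - (w * (n * (hr (n*(x*z)) w)))) + (-2:ℤ) • ((w * (n * (n * (hl (y + (w*x)) z)))) - (w * (n * (n * (hl y z)))) - (w * (n * (n * (hl (w*x) z))))) + (-(1:ℤ)) • ((w * (n * (n * (hl (w + z) (x*y))))) - (w * (n * (n * (hl w (x*y))))) - (w * (n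 * (n * (hl z (x*y)))))) + ((n * (hl (x + (n*(y*z))) (w*w))) - (n * (hl x (w*w))) - (n * (hl (n*(y*z)) (w*w)))) + (-(1:ℤ)) • ((n * (w * (hl (y + (w*x)) (n*z)))) - (n * (w * (hl y (n*z)))) - (n * (w * (hl (w*x) (n*z))))) + (-(1:ℤ)) • ((n * (w * (hl (w + (n*z)) (y*x)))) - (n * (w * (hl w (y*x)))) - (n * (w * (hl (n*z) (y*x))))) + (-(1:ℤ)) • ((n * (w * (y * (n * (hr (x + z) w))))) - (n * (w * (y * (n * (hr x w))))) - (n * (w * (y * (n * (hr z w)))))) + (-(1:ℤ)) • ((n * (w * (n * (hl (w + (x*z)) y)))) - (n * (w * (n * (hl w y)))) - (n * (w * (n * (hl (x*z) y))))) + (-(1:ℤ)) • (w * (n * ((w * (hn x y)) * z))) + (-(1:ℤ)) • (n * (w * (hm ((w*x)*y) z))) + (-(1:ℤ)) • (w * (n * (y * (hn (z*w) x)))) + (n * (w * (y * (hn (z*w) x)))) + (n * (w * ((hr2 x (y*w)) * z))) + (-(1:ℤ)) • (n * (w * ((hr2 y w) * (x*z)))) + (-(1:ℤ)) • (w * (n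 * (hn w ((x*y)*z)))) + (-(1:ℤ)) • (w * (n * (w * (hn (x*y) z)))) + (n * (w * (hn (z*w) (y*x)))) + (-(1:ℤ)) • (w * (n * ((hn x w) * (y*z)))) + (n * (w * (w * (hn (x*y) z)))) + (w * (n * ((hn (x*w) y) * z)))
  have e5 : ((x*(n*(y*(n*z))))*(w*w) + ((n*(y*(n*z)))*x)*(w*w) - x*((n*(y*(n*z)))*(w*w)) - (n*(y*(n*z)))*(x*(w*w))) + (w*((w*x)*(n*(n*(y*z))) + (w*(n*(n*(y*z))))*x - w*(x*(n*(n*(y*z)))) - w*((n*(n*(y*z)))*x))) + (-(w*(n*((x*(n*z))*(w*y) + (x*(w*y))*(n*z) - x*((n*z)*(w*y)) - x*((w*y)*(n*z)))))) + (-(w*(n*((w*y)*(n*(x*z)) + (y*w)*(n*(x*z)) - w*(y*(n*(x*z))) - y*(w*(n*(x*z))))))) + (2:ℤ) • (w*(n*(n*((y*z)*(w*x) + (y*(w*x))*z - y*(z*(w*x)) - y*((w*x)*z))))) + (-(w*(n*(n*((w*y)*(x*z) + (w*(x*z))*y - w*(y*(x*z)) - w*((x*z)*y)))))) + (-(n*((w*(y*(n*z)))*(w*x)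 + ((y*(n*z))*w)*(w*x) - w*((y*(n*z))*(w*x)) - (y*(n*z))*(w*(w*x))))) + (2:ℤ) • (n*(w*((y*(n*z))*(w*x) + (y*(w*x))*(n*z) - y*((n*z)*(w*x)) - y*((w*x)*(n*z))))) + (n*(w*((w*(n*z))*(x*y) + (w*(x*y))*(n*z) - w*((n*z)*(x*y)) - w*((x*y)*(n*z))))) + (n*(w*(y*(n*((w*x)*z + (x*w)*z - w*(x*z) - x*(w*z)))))) + (-(n*(w*(n*((w*(x*y))*z + ((x*y)*w)*z - w*((x*y)*z) - (x*y)*(w*z)))))) + (w*(n*((((w*x)*y)*n)*z - ((w*x)*y)*(n*z)))) + (n*(w*((((w*x)*y)*n - (w*x)*(y*n))*z))) + (-(w*(n*(y*(((n*z)*w - n*(z*w))*x))))) + (n*(w*(y*(((n*z)*w - n*(z*w))*x)))) + (n*(w*((x*((y*w)*n - y*(w*n)))*z))) + (-(n*(w*((n*w)*(x*(y*z)) - n*(w*(x*(y*z))))))) + (-((w*n)*((n*w)*((x*y)*z)) - w*(n*((n*w)*((x*y)*z))))) + (w*(n*((w*n)*((x*y)*z) - w*(n*((x*y)*z))))) +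 (n*(w*(((n*z)*w - n*(z*w))*(y*x)))) + (-(w*(n*((n*(x*y))*(w*z) - n*((x*y)*(w*z)))))) + (-(n*(w*((w*n)*((x*y)*z) - w*(n*((x*y)*z)))))) + (w*(n*((((n*x)*w - n*(x*w))*y)*z))) = 0 := by
    linear_combination (norm := (simp only [mul_add, add_mul, mul_sub, sub_mul, mul_neg, neg_mul, zsmul_eq_mul]; abel)) ((hl (x + (n*(y*(n*z)))) (w*w)) - (hl x (w*w)) - (hl (n*(y*(n*z))) (w*w))) + ((w * (hr (x + (n*(n*(y*z)))) w)) - (w * (hr x w)) - (w * (hr (n*(n*(y*z))) w))) + (-(1:ℤ)) • ((w * (n * (hr ((n*z) + (w*y)) x))) - (w * (n * (hr (n*z) x))) - (w * (n * (hr (w*y) x)))) + (-(1:ℤ)) • ((w * (n * (hl (w + y) (n*(x*z))))) - (w * (n * (hl w (n*(x*z))))) - (w * (n * (hl y (n*(x*z)))))) + (2:ℤ) • ((w * (n * (n * (hr (z + (w*x)) y)))) - (w * (n * (n * (hr z y)))) - (w * (n * (n * (hr (w*x) y))))) + (-(1:ℤ)) • ((w * (n * (n * (hr (y + (x*z)) w))))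 - (w * (n * (n * (hr y w)))) - (w * (n * (n * (hr (x*z) w))))) + (-(1:ℤ)) • ((n * (hl (w + (y*(n*z))) (w*x))) - (n * (hl w (w*x))) - (n * (hl (y*(n*z)) (w*x)))) + (2:ℤ) • ((n * (w * (hr ((n*z) + (w*x)) y))) - (n * (w * (hr (n*z) y))) - (n * (w * (hr (w*x) y)))) + ((n * (w * (hr ((n*z) + (x*y)) w))) - (n * (w * (hr (n*z) w))) - (n * (w * (hr (x*y) w)))) + ((n * (w * (y * (n * (hl (w + x) z))))) - (n * (w * (y * (n * (hl w z))))) - (n * (w * (y * (n * (hl x z)))))) + (-(1:ℤ)) • ((n * (w * (n * (hl (w + (x*y)) z)))) - (n * (w * (n * (hl w z)))) - (n * (w * (n * (hl (x*y) z))))) + (w * (n * (hm ((w*x)*y) z))) + (n * (w * ((hr2 (w*x) y) * z))) + (-(1:ℤ)) • (w * (n * (y * ((hn z w) * x)))) + (n * (w * (y * ((hn z w) * x)))) + (n * (w * ((x * (hr2 y w)) * z))) + (-(1:ℤ)) • (n * (w * (hn w (x*(y*z))))) + (-(1:ℤ)) • (hm w ((n*w)*((x*y)*z))) + (w * (n *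 (hm w ((x*y)*z)))) + (n * (w * ((hn z w) * (y*x)))) + (-(1:ℤ)) • (w * (n * (hn (x*y) (w*z)))) + (-(1:ℤ)) • (n * (w * (hm w ((x*y)*z)))) + (w * (n * (((hn x w) * y) * z)))
  have e6 : ((x*(n*(n*(y*z))))*(w*w) + (x*(w*w))*(n*(n*(y*z))) - x*((n*(n*(y*z)))*(w*w)) - x*((w*w)*(n*(n*(y*z))))) + (-(w*(n*(((w*(n*x))*y + ((n*x)*w)*y - w*((n*x)*y) - (n*x)*(w*y))*z)))) + (w*(n*((x*(n*z))*(w*y) + ((n*z)*x)*(w*y) - x*((n*z)*(w*y)) - (n*z)*(x*(w*y))))) + (w*(n*((w*x)*(y*(n*z)) + (w*(y*(n*z)))*x - w*(x*(y*(n*z))) - w*((y*(n*z))*x)))) + (-2:ℤ) • (w*(n*(n*((y*z)*(w*x) + (z*y)*(w*x) - y*(z*(w*x)) - z*(y*(w*x)))))) + (-(w*(n*(n*((w*x)*(y*z) + (w*(y*z))*x - w*(x*(y*z)) - w*((y*z)*x)))))) + (n*((w*(w*x))*(y*(n*z)) + (w*(y*(n*z)))*(w*x) - w*((w*x)*(y*(n*z)))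 - w*((y*(n*z))*(w*x)))) + (-2:ℤ) • (n*(w*((y*(n*z))*(w*x) + ((n*z)*y)*(w*x) - y*((n*z)*(w*x)) - (n*z)*(y*(w*x))))) + (-(n*(w*((w*(n*z))*(x*y) + ((n*z)*w)*(x*y) - w*((n*z)*(x*y)) - (n*z)*(w*(x*y)))))) + (n*(w*(w*((x*y)*(n*z) + (y*x)*(n*z) - x*(y*(n*z)) - y*(x*(n*z)))))) + (-(n*(w*(n*((w*z)*(y*x) + (w*(y*x))*z - w*(z*(y*x)) - w*((y*x)*z)))))) + (-(w*(n*((((w*x)*y)*n - (w*x)*(y*n))*z)))) + (n*(w*(((w*(x*y))*n)*z - (w*(x*y))*(n*z)))) + (w*(n*(y*(w*((n*x)*z - n*(x*z)))))) + (-(n*(w*(y*(w*((n*x)*z - n*(x*z))))))) + (w*((n*(y*(n*z)))*(w*x) - n*((y*(n*z))*(w*x)))) + (-((n*w)*((n*w)*(x*(y*z))) - n*(w*((n*w)*(x*(y*z)))))) + (w*(n*((n*x)*(w*(y*z)) - n*(x*(w*(y*z)))))) + ((w*n)*((w*n)*((x*y)*z)) - w*(n*((w*n)*((x*y)*z))))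 + (n*(w*((n*(z*w))*(x*y) - n*((z*w)*(x*y))))) + (-(w*(n*((n*(x*z))*(w*y) - n*((x*z)*(w*y)))))) + (-((n*w)*((w*n)*((x*y)*z)) - n*(w*((w*n)*((x*y)*z))))) + (w*(n*((n*((x*y)*w))*z - n*(((x*y)*w)*z)))) = 0 := by
    linear_combination (norm := (simp only [mul_add, add_mul, mul_sub, sub_mul, mul_neg, neg_mul, zsmul_eq_mul]; abel)) ((hr ((n*(n*(y*z))) + (w*w)) x) - (hr (n*(n*(y*z))) x) - (hr (w*w) x)) + (-(1:ℤ)) • ((w * (n * ((hl (w + (n*x)) y) * z))) - (w * (n * ((hl w y) * z))) - (w * (n * ((hl (n*x) y) * z)))) + ((w * (n * (hl (x + (n*z)) (w*y)))) - (w * (n * (hl x (w*y)))) - (w * (n * (hl (n*z) (w*y))))) + ((w * (n * (hr (x + (y*(n*z))) w))) - (w * (n * (hr x w))) - (w * (n * (hr (y*(n*z)) w)))) + (-2:ℤ) • ((w * (n * (n * (hl (y + z) (w*x))))) - (w * (n * (n * (hl y (w*x))))) - (w * (n * (n * (hl z (w*x)))))) + (-(1:ℤ)) • ((w * (n * (n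 * (hr (x + (y*z)) w)))) - (w * (n * (n * (hr x w)))) - (w * (n * (n * (hr (y*z) w))))) + ((n * (hr ((w*x) + (y*(n*z))) w)) - (n * (hr (w*x) w)) - (n * (hr (y*(n*z)) w))) + (-2:ℤ) • ((n * (w * (hl (y + (n*z)) (w*x)))) - (n * (w * (hl y (w*x)))) - (n * (w * (hl (n*z) (w*x))))) + (-(1:ℤ)) • ((n * (w * (hl (w + (n*z)) (x*y)))) - (n * (w * (hl w (x*y)))) - (n * (w * (hl (n*z) (x*y))))) + ((n * (w * (w * (hl (x + y) (n*z))))) - (n * (w * (w * (hl x (n*z))))) - (n * (w * (w * (hl y (n*z)))))) + (-(1:ℤ)) • ((n * (w * (n * (hr (z + (y*x)) w)))) - (n * (w * (n * (hr z w)))) - (n * (w * (n * (hr (y*x) w))))) + (-(1:ℤ)) • (w * (n * ((hr2 (w*x) y) * z))) + (n * (w * (hm (w*(x*y)) z))) + (w * (n * (y * (w * (hn x z))))) + (-(1:ℤ)) • (n * (w * (y * (w * (hn x z))))) + (w * (hn (y*(n*z)) (w*x))) + (-(1:ℤ)) • (hn w ((n*w)*(x*(y*z)))) + (w * (n * (hn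 x (w*(y*z))))) + (hm w ((w*n)*((x*y)*z))) + (n * (w * (hn (z*w) (x*y)))) + (-(1:ℤ)) • (w * (n * (hn (x*z) (w*y)))) + (-(1:ℤ)) • (hn w ((w*n)*((x*y)*z))) + (w * (n * (hn ((x*y)*w) z)))
  have e7 : (-((x*(n*(n*(y*z))))*(w*w) + ((n*(n*(y*z)))*x)*(w*w) - x*((n*(n*(y*z)))*(w*w)) - (n*(n*(y*z)))*(x*(w*w)))) + (w*(n*(((w*y)*(n*x) + (y*w)*(n*x) - w*(y*(n*x)) - y*(w*(n*x)))*z))) + (-(w*(n*((w*(y*(n*z)))*x + ((y*(n*z))*w)*x - w*((y*(n*z))*x) - (y*(n*z))*(w*x))))) + (w*(n*(y*((w*(n*z))*x + ((n*z)*w)*x - w*((n*z)*x) - (n*z)*(w*x))))) + (-(w*(n*(n*((x*(w*y))*z + ((w*y)*x)*z - x*((w*y)*z) - (w*y)*(x*z)))))) + (-(w*(n*(n*((w*x)*(y*z) + (x*w)*(y*z) - w*(x*(y*z)) - x*(w*(y*z))))))) + (-(n*((w*(n*(y*z)))*(w*x) + (w*(w*x))*(n*(y*z)) - w*((n*(y*z))*(w*x))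 - w*((w*x)*(n*(y*z)))))) + (n*(w*((x*(y*(w*n)))*z + ((y*(w*n))*x)*z - x*((y*(w*n))*z) - (y*(w*n))*(x*z)))) + (-(n*(w*((w*(n*x))*(y*z) + ((n*x)*w)*(y*z) - w*((n*x)*(y*z)) - (n*x)*(w*(y*z)))))) + (-(n*(w*(n*(((w*x)*y + (w*y)*x - w*(x*y) - w*(y*x))*z))))) + (n*(w*(n*((w*z)*(y*x) + (z*w)*(y*x) - w*(z*(y*x)) - z*(w*(y*x)))))) + (-(w*(n*(((w*(x*y))*n)*z - (w*(x*y))*(n*z))))) + (-(n*(w*(((w*(x*y))*n - w*((x*y)*n))*z)))) + (n*(w*(x*(((y*w)*n)*z - (y*w)*(n*z))))) + (-(w*((n*((y*(n*z))*w))*x - n*(((y*(n*z))*w)*x)))) + (n*(w*((((y*w)*n - y*(w*n))*x)*z))) + (n*(w*((n*w)*((x*y)*z) - n*(w*((x*y)*z))))) + (n*(w*((n*(x*w))*(y*z) - n*((x*w)*(y*z))))) + (n*(w*((n*(y*z))*(w*x) - n*((y*z)*(w*x))))) + (n*(w*(((n*z)*w - n*(z*w))*(x*y)))) + (-(n*(w*((n*((y*z)*w))*x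 - n*(((y*z)*w)*x))))) + (-(w*(n*((n*(z*w))*(x*y) - n*((z*w)*(x*y)))))) + (w*(n*(((n*(x*y))*w - n*((x*y)*w))*z))) = 0 := by
    linear_combination (norm := (simp only [mul_add, add_mul, mul_sub, sub_mul, mul_neg, neg_mul, zsmul_eq_mul]; abel)) (-(1:ℤ)) • ((hl (x + (n*(n*(y*z)))) (w*w)) - (hl x (w*w)) - (hl (n*(n*(y*z))) (w*w))) + ((w * (n * ((hl (w + y) (n*x)) * z))) - (w * (n * ((hl w (n*x)) * z))) - (w * (n * ((hl y (n*x)) * z)))) + (-(1:ℤ)) • ((w * (n * (hl (w + (y*(n*z))) x))) - (w * (n * (hl w x))) - (w * (n * (hl (y*(n*z)) x)))) + ((w * (n * (y * (hl (w + (n*z)) x)))) - (w * (n * (y * (hl w x)))) - (w * (n * (y * (hl (n*z) x))))) + (-(1:ℤ)) • ((w * (n * (n * (hl (x + (w*y)) z)))) - (w * (n * (n * (hl x z)))) - (w * (n * (n * (hl (w*y) z))))) + (-(1:ℤ)) • ((w * (n * (n * (hl (w + x) (y*z))))) - (w * (n * (n * (hl w (y*z))))) - (w * (n * (n * (hl x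 (y*z)))))) + (-(1:ℤ)) • ((n * (hr ((n*(y*z)) + (w*x)) w)) - (n * (hr (n*(y*z)) w)) - (n * (hr (w*x) w))) + ((n * (w * (hl (x + (y*(w*n))) z))) - (n * (w * (hl x z))) - (n * (w * (hl (y*(w*n)) z)))) + (-(1:ℤ)) • ((n * (w * (hl (w + (n*x)) (y*z)))) - (n * (w * (hl w (y*z)))) - (n * (w * (hl (n*x) (y*z))))) + (-(1:ℤ)) • ((n * (w * (n * ((hr (x + y) w) * z)))) - (n * (w * (n * ((hr x w) * z)))) - (n * (w * (n * ((hr y w) * z))))) + ((n * (w * (n * (hl (w + z) (y*x))))) - (n * (w * (n * (hl w (y*x))))) - (n * (w * (n * (hl z (y*x)))))) + (-(1:ℤ)) • (w * (n * (hm (w*(x*y)) z))) + (-(1:ℤ)) • (n * (w * ((hr2 w (x*y)) * z))) + (n * (w * (x * (hm (y*w) z)))) + (-(1:ℤ)) • (w * (hn ((y*(n*z))*w) x)) + (n * (w * (((hr2 y w) * x) * z))) + (n * (w * (hn w ((x*y)*z)))) + (n * (w * (hn (x*w) (y*z)))) + (n * (w * (hn (y*z) (w*x)))) + (n * (w * ((hn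 z w) * (x*y)))) + (-(1:ℤ)) • (n * (w * (hn ((y*z)*w) x))) + (-(1:ℤ)) • (w * (n * (hn (z*w) (x*y)))) + (w * (n * ((hn (x*y) w) * z)))
  have e8 : (-((w*(n*(y*(n*z))))*(w*x) + (w*(w*x))*(n*(y*(n*z))) - w*((n*(y*(n*z)))*(w*x)) - w*((w*x)*(n*(y*(n*z)))))) + (-(w*(n*(((w*y)*x + (y*w)*x - w*(y*x) - y*(w*x))*(n*z))))) + (-(w*(n*((w*(n*(x*z)))*y + ((n*(x*z))*w)*y - w*((n*(x*z))*y) - (n*(x*z))*(w*y))))) + (w*(n*(y*((w*(n*x))*z + ((n*x)*w)*z - w*((n*x)*z) - (n*x)*(w*z))))) + (w*(n*(n*((x*z)*(w*y) + (x*(w*y))*z - x*(z*(w*y)) - x*((w*y)*z))))) + (w*(n*(n*(w*((x*y)*z + (y*x)*z - x*(y*z) - y*(x*z)))))) + (n*((w*(n*(y*z)))*(w*x) + ((n*(y*z))*w)*(w*x) - w*((n*(y*z))*(w*x)) - (n*(y*z))*(w*(w*x)))) + (-(n*(w*((x*(y*w))*(n*z) + ((y*w)*x)*(n*z) - x*((y*w)*(n*z))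 - (y*w)*(x*(n*z)))))) + (-(n*(w*((w*y)*(x*(n*z)) + (y*w)*(x*(n*z)) - w*(y*(x*(n*z))) - y*(w*(x*(n*z))))))) + (-(n*(w*(n*(((w*x)*y + (x*w)*y - w*(x*y) - x*(w*y))*z))))) + (-(n*(w*(n*((w*z)*(x*y) + (w*(x*y))*z - w*(z*(x*y)) - w*((x*y)*z)))))) + (w*(n*(((w*(x*y))*n - w*((x*y)*n))*z))) + (-(n*(w*((w*((x*y)*n - x*(y*n)))*z)))) + (-(n*(w*(x*(((y*w)*n - y*(w*n))*z))))) + (-(w*(((n*(y*(n*z)))*w - n*((y*(n*z))*w))*x))) + (-(n*(w*((((y*w)*n)*x - (y*w)*(n*x))*z)))) + ((n*w)*((n*w)*((x*y)*z)) - n*(w*((n*w)*((x*y)*z)))) + (n*(w*(((n*x)*w - n*(x*w))*(y*z)))) + (w*(n*((n*z)*(w*(x*y)) - n*(z*(w*(x*y)))))) + (-(n*(w*((n*((x*w)*y))*z - n*(((x*w)*y)*z))))) + (-(n*(w*(((n*(y*z))*w - n*((y*z)*w))*x)))) + (-(w*(n*(((n*z)*w - n*(z*w))*(x*y))))) + (w*(n*((n*((x*z)*w))*y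 - n*(((x*z)*w)*y)))) = 0 := by
    linear_combination (norm := (simp only [mul_add, add_mul, mul_sub, sub_mul, mul_neg, neg_mul, zsmul_eq_mul]; abel)) (-(1:ℤ)) • ((hr ((n*(y*(n*z))) + (w*x)) w) - (hr (n*(y*(n*z))) w) - (hr (w*x) w)) + (-(1:ℤ)) • ((w * (n * ((hl (w + y) x) * (n*z)))) - (w * (n * ((hl w x) * (n*z)))) - (w * (n * ((hl y x) * (n*z))))) + (-(1:ℤ)) • ((w * (n * (hl (w + (n*(x*z))) y))) - (w * (n * (hl w y))) - (w * (n * (hl (n*(x*z)) y)))) + ((w * (n * (y * (hl (w + (n*x)) z)))) - (w * (n * (y * (hl w z)))) - (w * (n * (y * (hl (n*x) z))))) + ((w * (n * (n * (hr (z + (w*y)) x)))) - (w * (n * (n * (hr z x)))) - (w * (n * (n * (hr (w*y) x))))) + ((w * (n * (n * (w * (hl (x + y) z))))) - (w * (n * (n * (w * (hl x z))))) - (w * (n * (n * (w * (hl y z)))))) + ((n * (hl (w + (n*(y*z))) (w*x))) - (n * (hl w (w*x))) - (n * (hl (n*(y*z)) (w*x)))) + (-(1:ℤ)) • ((n * (w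 * (hl (x + (y*w)) (n*z)))) - (n * (w * (hl x (n*z)))) - (n * (w * (hl (y*w) (n*z))))) + (-(1:ℤ)) • ((n * (w * (hl (w + y) (x*(n*z))))) - (n * (w * (hl w (x*(n*z))))) - (n * (w * (hl y (x*(n*z)))))) + (-(1:ℤ)) • ((n * (w * (n * ((hl (w + x) y) * z)))) - (n * (w * (n * ((hl w y) * z)))) - (n * (w * (n * ((hl x y) * z))))) + (-(1:ℤ)) • ((n * (w * (n * (hr (z + (x*y)) w)))) - (n * (w * (n * (hr z w)))) - (n * (w * (n * (hr (x*y) w))))) + (w * (n * ((hr2 w (x*y)) * z))) + (-(1:ℤ)) • (n * (w * ((w * (hr2 x y)) * z))) + (-(1:ℤ)) • (n * (w * (x * ((hr2 y w) * z)))) + (-(1:ℤ)) • (w * ((hn (y*(n*z)) w) * x)) + (-(1:ℤ)) • (n * (w * ((hm (y*w) x) * z))) + (hn w ((n*w)*((x*y)*z))) + (n * (w * ((hn x w) * (y*z)))) + (w * (n * (hn z (w*(x*y))))) + (-(1:ℤ)) • (n * (w * (hn ((x*w)*y) z))) + (-(1:ℤ)) • (n * (w * ((hn (y*z) w) * x)))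 + (-(1:ℤ)) • (w * (n * ((hn z w) * (x*y)))) + (w * (n * (hn ((x*z)*w) y)))
  have e9 : ((w*(n*(y*(n*z))))*(w*x) + ((n*(y*(n*z)))*w)*(w*x) - w*((n*(y*(n*z)))*(w*x)) - (n*(y*(n*z)))*(w*(w*x))) + (-(w*(n*(((w*x)*(y*n) + (w*(y*n))*x - w*(x*(y*n)) - w*((y*n)*x))*z)))) + (-(w*(n*((w*(n*(x*y)))*z + ((n*(x*y))*w)*z - w*((n*(x*y))*z) - (n*(x*y))*(w*z))))) + (-(w*(n*(y*((w*x)*(n*z) + (w*(n*z))*x - w*(x*(n*z)) - w*((n*z)*x)))))) + (-(w*(n*(n*((x*z)*(w*y) + (z*x)*(w*y) - x*(z*(w*y)) - z*(x*(w*y))))))) + (n*(((w*w)*x - w*(w*x))*(y*(n*z)))) + (-(n*((w*w)*(x*(y*(n*z))) - w*(w*(x*(y*(n*z))))))) + (-(n*(w*((x*(w*y))*(n*z) + ((w*y)*x)*(n*z) - x*((w*y)*(n*z)) - (w*y)*(x*(n*z)))))) + (-(n*(w*((w*y)*(n*(x*z)) + (w*(n*(x*z)))*y - w*(y*(n*(x*z)))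 - w*((n*(x*z))*y))))) + (2:ℤ) • (n*(w*(n*((y*(w*x))*z + ((w*x)*y)*z - y*((w*x)*z) - (w*x)*(y*z))))) + (n*(w*(n*((w*z)*(x*y) + (z*w)*(x*y) - w*(z*(x*y)) - z*(w*(x*y)))))) + (w*(n*((w*((x*y)*n - x*(y*n)))*z))) + (n*(w*((w*((y*n)*x - y*(n*x)))*z))) + (w*(n*(((x*(y*w))*n)*z - (x*(y*w))*(n*z)))) + (-(w*(n*((((y*w)*n - y*(w*n))*x)*z)))) + (-(w*(n*(((y*w)*n)*(x*z) - (y*w)*(n*(x*z)))))) + (-(n*(w*((n*x)*(w*(y*z)) - n*(x*(w*(y*z))))))) + (n*(w*((n*(x*y))*(w*z) - n*((x*y)*(w*z))))) + (w*(n*((n*z)*(w*(y*x)) - n*(z*(w*(y*x)))))) + (-(n*(w*(((n*(x*w))*y - n*((x*w)*y))*z)))) + (-(w*(n*((n*(x*(w*y)))*z - n*((x*(w*y))*z))))) + (-(w*(n*((n*(z*w))*(y*x) - n*((z*w)*(y*x)))))) + (w*(n*(((n*(x*z))*w - n*((x*z)*w))*y))) = 0 := by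
    linear_combination (norm := (simp only [mul_add, add_mul, mul_sub, sub_mul, mul_neg, neg_mul, zsmul_eq_mul]; abel)) ((hl (w + (n*(y*(n*z)))) (w*x)) - (hl w (w*x)) - (hl (n*(y*(n*z))) (w*x))) + (-(1:ℤ)) • ((w * (n * ((hr (x + (y*n)) w) * z))) - (w * (n * ((hr x w) * z))) - (w * (n * ((hr (y*n) w) * z)))) + (-(1:ℤ)) • ((w * (n * (hl (w + (n*(x*y))) z))) - (w * (n * (hl w z))) - (w * (n * (hl (n*(x*y)) z)))) + (-(1:ℤ)) • ((w * (n * (y * (hr (x + (n*z)) w)))) - (w * (n * (y * (hr x w)))) - (w * (n * (y * (hr (n*z) w))))) + (-(1:ℤ)) • ((w * (n * (n * (hl (x + z) (w*y))))) - (w * (n * (n * (hl x (w*y))))) - (w * (n * (n * (hl z (w*y)))))) + (n * ((hl w x) * (y*(n*z)))) + (-(1:ℤ)) • (n * (hl w (x*(y*(n*z))))) + (-(1:ℤ)) • ((n * (w * (hl (x + (w*y)) (n*z)))) - (n * (w * (hl x (n*z)))) - (n * (w * (hl (w*y) (n*z))))) + (-(1:ℤ)) • ((n * (w * (hr (y +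 (n*(x*z))) w))) - (n * (w * (hr y w))) - (n * (w * (hr (n*(x*z)) w)))) + (2:ℤ) • ((n * (w * (n * (hl (y + (w*x)) z)))) - (n * (w * (n * (hl y z)))) - (n * (w * (n * (hl (w*x) z))))) + ((n * (w * (n * (hl (w + z) (x*y))))) - (n * (w * (n * (hl w (x*y))))) - (n * (w * (n * (hl z (x*y)))))) + (w * (n * ((w * (hr2 x y)) * z))) + (n * (w * ((w * (hm y x)) * z))) + (w * (n * (hm (x*(y*w)) z))) + (-(1:ℤ)) • (w * (n * (((hr2 y w) * x) * z))) + (-(1:ℤ)) • (w * (n * (hm (y*w) (x*z)))) + (-(1:ℤ)) • (n * (w * (hn x (w*(y*z))))) + (n * (w * (hn (x*y) (w*z)))) + (w * (n * (hn z (w*(y*x))))) + (-(1:ℤ)) • (n * (w * ((hn (x*w) y) * z))) + (-(1:ℤ)) • (w * (n * (hn (x*(w*y)) z))) + (-(1:ℤ)) • (w * (n * (hn (z*w) (y*x)))) + (w * (n * ((hn (x*z) w) * y)))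
  have e10 : ((w*(n*(n*(y*z))))*(w*x) + (w*(w*x))*(n*(n*(y*z))) - w*((n*(n*(y*z)))*(w*x)) - w*((w*x)*(n*(n*(y*z))))) + (w*(n*((y*(w*(n*x)))*z + ((w*(n*x))*y)*z - y*((w*(n*x))*z) - (w*(n*x))*(y*z)))) + (-(w*(n*((w*(n*z))*(y*x) + (w*(y*x))*(n*z) - w*((n*z)*(y*x)) - w*((y*x)*(n*z)))))) + (-(w*(n*(y*(n*((w*z)*x + (z*w)*x - w*(z*x) - z*(w*x))))))) + (w*(n*(n*((w*(y*z))*x + ((y*z)*w)*x - w*((y*z)*x) - (y*z)*(w*x))))) + (-(n*(((w*w)*x - w*(w*x))*(n*(y*z))))) + (n*((w*w)*(x*(n*(y*z))) - w*(w*(x*(n*(y*z)))))) + (n*(w*((x*(n*z))*(w*y) + (x*(w*y))*(n*z) - x*((n*z)*(w*y)) - x*((w*y)*(n*z))))) + (n*(w*((w*y)*(n*(x*z)) + (y*w)*(n*(x*z)) - w*(y*(n*(x*z))) - y*(w*(n*(x*z)))))) + (-2:ℤ) • (n*(w*(n*((y*z)*(w*x) + (y*(w*x))*z - y*(z*(w*x))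 - y*((w*x)*z))))) + (n*(w*(n*((w*y)*(x*z) + (w*(x*z))*y - w*(y*(x*z)) - w*((x*z)*y))))) + (-(w*(n*((w*((y*n)*x - y*(n*x)))*z)))) + (w*(n*(y*((n*x)*(w*z) - n*(x*(w*z)))))) + (-(w*(n*(((x*(y*w))*n - x*((y*w)*n))*z)))) + (w*(n*((((y*w)*n)*x - (y*w)*(n*x))*z))) + (w*(n*(((y*w)*n - y*(w*n))*(x*z)))) + (-(n*(w*((n*z)*(w*(x*y)) - n*(z*(w*(x*y))))))) + (w*(n*(w*((n*x)*(y*z) - n*(x*(y*z)))))) + (w*(n*((n*z)*(x*(w*y)) - n*(z*(x*(w*y)))))) + (-(n*(w*((((n*x)*w - n*(x*w))*y)*z)))) + (-(w*(n*(((n*x)*(w*y) - n*(x*(w*y)))*z)))) + (-(w*(n*(((n*z)*w - n*(z*w))*(y*x))))) + (w*(n*((n*((y*z)*w))*x - n*(((y*z)*w)*x)))) = 0 := by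
    linear_combination (norm := (simp only [mul_add, add_mul, mul_sub, sub_mul, mul_neg, neg_mul, zsmul_eq_mul]; abel)) ((hr ((n*(n*(y*z))) + (w*x)) w) - (hr (n*(n*(y*z))) w) - (hr (w*x) w)) + ((w * (n * (hl (y + (w*(n*x))) z))) - (w * (n * (hl y z))) - (w * (n * (hl (w*(n*x)) z)))) + (-(1:ℤ)) • ((w * (n * (hr ((n*z) + (y*x)) w))) - (w * (n * (hr (n*z) w))) - (w * (n * (hr (y*x) w)))) + (-(1:ℤ)) • ((w * (n * (y * (n * (hl (w + z) x))))) - (w * (n * (y * (n * (hl w x))))) - (w * (n * (y * (n * (hl z x)))))) + ((w * (n * (n * (hl (w + (y*z)) x)))) - (w * (n * (n * (hl w x)))) - (w * (n * (n * (hl (y*z) x))))) + (-(1:ℤ)) • (n * ((hl w x) * (n*(y*z)))) + (n * (hl w (x*(n*(y*z))))) + ((n * (w * (hr ((n*z) + (w*y)) x))) - (n * (w * (hr (n*z) x))) - (n * (w * (hr (w*y) x)))) + ((n * (w * (hl (w + y) (n*(x*z))))) - (n * (w * (hl w (n*(x*z))))) - (n * (w * (hl y (n*(x*z)))))) + (-2:ℤ)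 • ((n * (w * (n * (hr (z + (w*x)) y)))) - (n * (w * (n * (hr z y)))) - (n * (w * (n * (hr (w*x) y))))) + ((n * (w * (n * (hr (y + (x*z)) w)))) - (n * (w * (n * (hr y w)))) - (n * (w * (n * (hr (x*z) w))))) + (-(1:ℤ)) • (w * (n * ((w * (hm y x)) * z))) + (w * (n * (y * (hn x (w*z))))) + (-(1:ℤ)) • (w * (n * ((hr2 x (y*w)) * z))) + (w * (n * ((hm (y*w) x) * z))) + (w * (n * ((hr2 y w) * (x*z)))) + (-(1:ℤ)) • (n * (w * (hn z (w*(x*y))))) + (w * (n * (w * (hn x (y*z))))) + (w * (n * (hn z (x*(w*y))))) + (-(1:ℤ)) • (n * (w * (((hn x w) * y) * z))) + (-(1:ℤ)) • (w * (n * ((hn x (w*y)) * z))) + (-(1:ℤ)) • (w * (n * ((hn z w) * (y*x)))) + (w * (n * (hn ((y*z)*w) x)))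
  have e11 : (-((w*(n*(n*(y*z))))*(w*x) + ((n*(n*(y*z)))*w)*(w*x) - w*((n*(n*(y*z)))*(w*x)) - (n*(n*(y*z)))*(w*(w*x)))) + (w*(n*((y*(w*x))*(n*z) + ((w*x)*y)*(n*z) - y*((w*x)*(n*z)) - (w*x)*(y*(n*z))))) + (w*(n*((w*(n*z))*(y*x) + ((n*z)*w)*(y*x) - w*((n*z)*(y*x)) - (n*z)*(w*(y*x))))) + (w*(n*(y*(n*((w*x)*z + (w*z)*x - w*(x*z) - w*(z*x)))))) + (w*(n*(n*((w*(x*z))*y + ((x*z)*w)*y - w*((x*z)*y) - (x*z)*(w*y))))) + (-(n*((x*(y*(n*z)))*(w*w) + ((y*(n*z))*x)*(w*w) - x*((y*(n*z))*(w*w)) - (y*(n*z))*(x*(w*w))))) + (n*(w*(((w*(n*x))*y + ((n*x)*w)*y - w*((n*x)*y) - (n*x)*(w*y))*z))) + (-(n*(w*((x*(n*z))*(w*y) + ((n*z)*x)*(w*y) - x*((n*z)*(w*y)) - (n*z)*(x*(w*y)))))) + (-(n*(w*((w*x)*(n*(y*z)) + (w*(n*(y*z)))*x - w*(x*(n*(y*z)))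 - w*((n*(y*z))*x))))) + (2:ℤ) • (n*(w*(n*((y*z)*(w*x) + (z*y)*(w*x) - y*(z*(w*x)) - z*(y*(w*x)))))) + (n*(w*(n*((w*x)*(y*z) + (w*(y*z))*x - w*(x*(y*z)) - w*((y*z)*x))))) + (-(w*(n*((((w*y)*n - w*(y*n))*x)*z)))) + (n*(w*((((w*y)*n - w*(y*n))*x)*z))) + (-(w*(n*((x*((y*w)*n - y*(w*n)))*z)))) + ((n*((n*(y*z))*w))*(w*x) - n*(((n*(y*z))*w)*(w*x))) + (-((n*((y*(n*z))*w))*(w*x) - n*(((y*(n*z))*w)*(w*x)))) + (-(n*(w*((n*z)*(w*(y*x)) - n*(z*(w*(y*x))))))) + (-(w*(n*((w*n)*(x*(y*z)) - w*(n*(x*(y*z))))))) + (n*(w*((n*(z*x))*(w*y) - n*((z*x)*(w*y))))) + (-(n*(w*((n*((x*y)*w))*z - n*(((x*y)*w)*z))))) + (-(n*(w*(w*((n*x)*(y*z) - n*(x*(y*z))))))) + (-(w*(n*((n*(z*x))*(w*y) - n*((z*x)*(w*y)))))) + (w*(n*(((n*(y*z))*w - n*((y*z)*w))*x))) = 0 :=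 by
    linear_combination (norm := (simp only [mul_add, add_mul, mul_sub, sub_mul, mul_neg, neg_mul, zsmul_eq_mul]; abel)) (-(1:ℤ)) • ((hl (w + (n*(n*(y*z)))) (w*x)) - (hl w (w*x)) - (hl (n*(n*(y*z))) (w*x))) + ((w * (n * (hl (y + (w*x)) (n*z)))) - (w * (n * (hl y (n*z)))) - (w * (n * (hl (w*x) (n*z))))) + ((w * (n * (hl (w + (n*z)) (y*x)))) - (w * (n * (hl w (y*x)))) - (w * (n * (hl (n*z) (y*x))))) + ((w * (n * (y * (n * (hr (x + z) w))))) - (w * (n * (y * (n * (hr x w))))) - (w * (n * (y * (n * (hr z w)))))) + ((w * (n * (n * (hl (w + (x*z)) y)))) - (w * (n * (n * (hl w y)))) - (w * (n * (n * (hl (x*z) y))))) + (-(1:ℤ)) • ((n * (hl (x + (y*(n*z))) (w*w))) - (n * (hl x (w*w))) - (n * (hl (y*(n*z)) (w*w)))) + ((n * (w * ((hl (w + (n*x)) y) * z))) - (n * (w * ((hl w y) * z))) - (n * (w * ((hl (n*x) y) * z)))) + (-(1:ℤ)) • ((n * (w * (hl (x + (n*z)) (w*y)))) - (n * (w * (hl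 x (w*y)))) - (n * (w * (hl (n*z) (w*y))))) + (-(1:ℤ)) • ((n * (w * (hr (x + (n*(y*z))) w))) - (n * (w * (hr x w))) - (n * (w * (hr (n*(y*z)) w)))) + (2:ℤ) • ((n * (w * (n * (hl (y + z) (w*x))))) - (n * (w * (n * (hl y (w*x))))) - (n * (w * (n * (hl z (w*x)))))) + ((n * (w * (n * (hr (x + (y*z)) w)))) - (n * (w * (n * (hr x w)))) - (n * (w * (n * (hr (y*z) w))))) + (-(1:ℤ)) • (w * (n * (((hr2 w y) * x) * z))) + (n * (w * (((hr2 w y) * x) * z))) + (-(1:ℤ)) • (w * (n * ((x * (hr2 y w)) * z))) + (hn ((n*(y*z))*w) (w*x)) + (-(1:ℤ)) • (hn ((y*(n*z))*w) (w*x)) + (-(1:ℤ)) • (n * (w * (hn z (w*(y*x))))) + (-(1:ℤ)) • (w * (n * (hm w (x*(y*z))))) + (n * (w * (hn (z*x) (w*y)))) + (-(1:ℤ)) • (n * (w * (hn ((x*y)*w) z))) + (-(1:ℤ)) • (n * (w * (w * (hn x (y*z))))) + (-(1:ℤ)) • (w * (n * (hn (z*x) (w*y)))) + (w * (n * ((hn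 (y*z) w) * x)))
  have total : (w*n - n*w)*((w*n - n*w)*((x*y)*z - x*(y*z))) = ((-(((w*w)*x - w*(w*x))*(n*(y*(n*z))))) + ((w*w)*(x*(n*(y*(n*z)))) - w*(w*(x*(n*(y*(n*z)))))) + (-2:ℤ) • (w*(n*((y*(n*z))*(w*x) + (y*(w*x))*(n*z) - y*((n*z)*(w*x)) - y*((w*x)*(n*z))))) + (-(w*(n*((w*(n*z))*(x*y) + (w*(x*y))*(n*z) - w*((n*z)*(x*y)) - w*((x*y)*(n*z)))))) + (-(w*(n*(y*(n*((w*x)*z + (x*w)*z - w*(x*z) - x*(w*z))))))) + (w*(n*(n*((w*(x*y))*z + ((x*y)*w)*z - w*((x*y)*z) - (x*y)*(w*z))))) + (n*((x*(w*w))*(y*(n*z)) + (x*(y*(n*z)))*(w*w) - x*((w*w)*(y*(n*z))) - x*((y*(n*z))*(w*w)))) + (-(n*(w*(((w*y)*(n*x) + (y*w)*(n*x) - w*(y*(n*x)) - y*(w*(n*x)))*z)))) + (n*(w*((w*(n*(y*z)))*x + ((n*(y*z))*w)*x - w*((n*(y*z))*x) - (n*(y*z))*(w*x)))) + (-(n*(w*(y*((w*(n*z))*x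 + ((n*z)*w)*x - w*((n*z)*x) - (n*z)*(w*x)))))) + (n*(w*(n*((x*(w*y))*z + ((w*y)*x)*z - x*((w*y)*z) - (w*y)*(x*z))))) + (n*(w*(n*((w*x)*(y*z) + (x*w)*(y*z) - w*(x*(y*z)) - x*(w*(y*z)))))) + (w*(n*((((w*y)*n)*x - (w*y)*(n*x))*z))) + (-(n*(w*((((w*y)*n)*x - (w*y)*(n*x))*z)))) + (-(n*(w*(y*((n*x)*(w*z) - n*(x*(w*z))))))) + (((n*(n*(y*z)))*w - n*((n*(y*z))*w))*(w*x)) + (-(((n*(y*(n*z)))*w - n*((y*(n*z))*w))*(w*x))) + (-(n*(w*((n*z)*(x*(w*y)) - n*(z*(x*(w*y))))))) + (-((w*n)*((w*n)*(x*(y*z))) - w*(n*((w*n)*(x*(y*z)))))) + (n*(w*(((n*z)*x - n*(z*x))*(w*y)))) + (-(n*(w*(((n*(x*y))*w - n*((x*y)*w))*z)))) + (n*(w*((w*n)*(x*(y*z)) - w*(n*(x*(y*z)))))) + (-(w*(n*(((n*z)*x - n*(z*x))*(w*y))))) + (w*((n*((n*(y*z))*w))*x - n*(((n*(y*z))*w)*x))))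 + ((((w*w)*x - w*(w*x))*(n*(n*(y*z)))) + (-((w*w)*(x*(n*(n*(y*z)))) - w*(w*(x*(n*(n*(y*z))))))) + (2:ℤ) • (w*(n*((y*(n*z))*(w*x) + ((n*z)*y)*(w*x) - y*((n*z)*(w*x)) - (n*z)*(y*(w*x))))) + (w*(n*((w*(n*z))*(x*y) + ((n*z)*w)*(x*y) - w*((n*z)*(x*y)) - (n*z)*(w*(x*y))))) + (-(w*(n*(w*((x*y)*(n*z) + (y*x)*(n*z) - x*(y*(n*z)) - y*(x*(n*z))))))) + (w*(n*(n*((w*z)*(y*x) + (w*(y*x))*z - w*(z*(y*x)) - w*((y*x)*z))))) + (-(n*((x*(w*w))*(y*(n*z)) + ((w*w)*x)*(y*(n*z)) - x*((w*w)*(y*(n*z))) - (w*w)*(x*(y*(n*z)))))) + (n*(w*(((w*y)*x + (y*w)*x - w*(y*x) - y*(w*x))*(n*z)))) + (n*(w*((w*(n*(x*z)))*y + ((n*(x*z))*w)*y - w*((n*(x*z))*y) - (n*(x*z))*(w*y)))) + (-(n*(w*(y*((w*(n*x))*z + ((n*x)*w)*z - w*((n*x)*z) - (n*x)*(w*z))))))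 + (-(n*(w*(n*((x*z)*(w*y) + (x*(w*y))*z - x*(z*(w*y)) - x*((w*y)*z)))))) + (-(n*(w*(n*(w*((x*y)*z + (y*x)*z - x*(y*z) - y*(x*z))))))) + (n*(w*((w*((n*x)*y - n*(x*y)))*z))) + (w*(n*(y*((n*z)*(w*x) - n*(z*(w*x)))))) + (-(n*(w*(y*((n*z)*(w*x) - n*(z*(w*x))))))) + ((n*((n*(y*z))*x))*(w*w) - n*(((n*(y*z))*x)*(w*w))) + (-((n*((y*(n*z))*x))*(w*w) - n*(((y*(n*z))*x)*(w*w)))) + (-2:ℤ) • (n*(w*((n*z)*(y*(w*x)) - n*(z*(y*(w*x)))))) + (n*(w*((n*(x*z))*(w*y) - n*((x*z)*(w*y))))) + (2:ℤ) • (w*(n*((n*z)*(y*(w*x)) - n*(z*(y*(w*x)))))) + (-(n*(w*((n*((x*z)*w))*y - n*(((x*z)*w)*y))))) + ((n*w)*((w*n)*(x*(y*z))) - n*(w*((w*n)*(x*(y*z))))) + (-2:ℤ) • (w*(n*((n*(z*y))*(w*x) - n*((z*y)*(w*x))))) + (w*(((n*(n*(y*z)))*w - n*((n*(y*z))*w))*x)))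 + (((x*(w*w))*(n*(y*(n*z))) + ((w*w)*x)*(n*(y*(n*z))) - x*((w*w)*(n*(y*(n*z)))) - (w*w)*(x*(n*(y*(n*z))))) + (w*((w*(n*(y*(n*z))))*x + ((n*(y*(n*z)))*w)*x - w*((n*(y*(n*z)))*x) - (n*(y*(n*z)))*(w*x))) + (-(w*(n*((x*(y*(w*n)))*z + ((y*(w*n))*x)*z - x*((y*(w*n))*z) - (y*(w*n))*(x*z))))) + (w*(n*((w*(n*x))*(y*z) + ((n*x)*w)*(y*z) - w*((n*x)*(y*z)) - (n*x)*(w*(y*z))))) + (w*(n*(n*(((w*x)*y + (w*y)*x - w*(x*y) - w*(y*x))*z)))) + (-(w*(n*(n*((w*z)*(y*x) + (z*w)*(y*x) - w*(z*(y*x)) - z*(w*(y*x))))))) + (n*((x*(w*w))*(n*(y*z)) + ((w*w)*x)*(n*(y*z)) - x*((w*w)*(n*(y*z))) - (w*w)*(x*(n*(y*z))))) + (n*(w*(((w*x)*(y*n) + (w*(y*n))*x - w*(x*(y*n)) - w*((y*n)*x))*z))) + (n*(w*((w*(n*(x*y)))*z + ((n*(x*y))*w)*z - w*((n*(x*y))*z)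 - (n*(x*y))*(w*z)))) + (n*(w*(y*((w*x)*(n*z) + (w*(n*z))*x - w*(x*(n*z)) - w*((n*z)*x))))) + (n*(w*(n*((x*z)*(w*y) + (z*x)*(w*y) - x*(z*(w*y)) - z*(x*(w*y)))))) + ((n*(y*(n*z)))*(w*(w*x)) - n*((y*(n*z))*(w*(w*x)))) + (-(w*(n*(x*(((y*w)*n)*z - (y*w)*(n*z)))))) + (-(w*(n*(y*((n*(x*w))*z - n*((x*w)*z)))))) + (n*(w*(y*((n*(x*w))*z - n*((x*w)*z))))) + (((n*(n*(y*z)))*x - n*((n*(y*z))*x))*(w*w)) + (-(((n*(y*(n*z)))*x - n*((y*(n*z))*x))*(w*w))) + (w*(n*((n*w)*(x*(y*z)) - n*(w*(x*(y*z)))))) + (n*(w*((n*(x*(w*y)))*z - n*((x*(w*y))*z)))) + (2:ℤ) • (n*(w*((n*(z*y))*(w*x) - n*((z*y)*(w*x))))) + (-(n*(w*(((n*(x*z))*w - n*((x*z)*w))*y)))) + (-(w*(n*((n*(y*z))*(w*x) - n*((y*z)*(w*x)))))) + (-2:ℤ) • (w*(n*(((n*z)*y - n*(z*y))*(w*x))))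 + (-((n*(n*(y*z)))*(w*(w*x)) - n*((n*(y*z))*(w*(w*x)))))) + ((-((x*(w*w))*(n*(n*(y*z))) + ((w*w)*x)*(n*(n*(y*z))) - x*((w*w)*(n*(n*(y*z)))) - (w*w)*(x*(n*(n*(y*z)))))) + (-(w*((w*(n*(n*(y*z))))*x + ((n*(n*(y*z)))*w)*x - w*((n*(n*(y*z)))*x) - (n*(n*(y*z)))*(w*x)))) + (w*(n*((x*(y*w))*(n*z) + ((y*w)*x)*(n*z) - x*((y*w)*(n*z)) - (y*w)*(x*(n*z))))) + (w*(n*((w*y)*(x*(n*z)) + (y*w)*(x*(n*z)) - w*(y*(x*(n*z))) - y*(w*(x*(n*z)))))) + (w*(n*(n*(((w*x)*y + (x*w)*y - w*(x*y) - x*(w*y))*z)))) + (w*(n*(n*((w*z)*(x*y) + (w*(x*y))*z - w*(z*(x*y)) - w*((x*y)*z))))) + (-(n*((x*(n*(y*z)))*(w*w) + (x*(w*w))*(n*(y*z)) - x*((n*(y*z))*(w*w)) - x*((w*w)*(n*(y*z)))))) + (-(n*(w*((y*(w*(n*x)))*z + ((w*(n*x))*y)*z - y*((w*(n*x))*z)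 - (w*(n*x))*(y*z))))) + (n*(w*((w*(n*z))*(y*x) + (w*(y*x))*(n*z) - w*((n*z)*(y*x)) - w*((y*x)*(n*z))))) + (n*(w*(y*(n*((w*z)*x + (z*w)*x - w*(z*x) - z*(w*x)))))) + (-(n*(w*(n*((w*(y*z))*x + ((y*z)*w)*x - w*((y*z)*x) - (y*z)*(w*x)))))) + ((n*(y*(n*z)))*(x*(w*w)) - n*((y*(n*z))*(x*(w*w)))) + (w*(n*(x*(((y*w)*n - y*(w*n))*z)))) + (-(w*(n*(y*(((n*x)*w - n*(x*w))*z))))) + (n*(w*(y*(((n*x)*w - n*(x*w))*z)))) + (-(n*(w*(((x*(y*w))*n)*z - (x*(y*w))*(n*z))))) + (n*(w*(((y*w)*n)*(x*z) - (y*w)*(n*(x*z))))) + ((w*n)*((n*w)*(x*(y*z))) - w*(n*((n*w)*(x*(y*z))))) + (n*(w*(((n*x)*(w*y) - n*(x*(w*y)))*z))) + (2:ℤ) • (n*(w*(((n*z)*y - n*(z*y))*(w*x)))) + (-(w*(n*((n*(x*w))*(y*z) - n*((x*w)*(y*z)))))) + (-(w*((n*(n*(y*z)))*(w*x) - n*((n*(y*z))*(w*x)))))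 + (w*(n*((n*((x*w)*y))*z - n*(((x*w)*y)*z)))) + (-((n*(n*(y*z)))*(x*(w*w)) - n*((n*(y*z))*(x*(w*w)))))) + ((-((x*(n*(y*(n*z))))*(w*w) + (x*(w*w))*(n*(y*(n*z))) - x*((n*(y*(n*z)))*(w*w)) - x*((w*w)*(n*(y*(n*z)))))) + (-(w*((w*x)*(n*(y*(n*z))) + (w*(n*(y*(n*z))))*x - w*(x*(n*(y*(n*z)))) - w*((n*(y*(n*z)))*x)))) + (w*(n*((x*(w*y))*(n*z) + ((w*y)*x)*(n*z) - x*((w*y)*(n*z)) - (w*y)*(x*(n*z))))) + (w*(n*((w*y)*(n*(x*z)) + (w*(n*(x*z)))*y - w*(y*(n*(x*z))) - w*((n*(x*z))*y)))) + (-2:ℤ) • (w*(n*(n*((y*(w*x))*z + ((w*x)*y)*z - y*((w*x)*z) - (w*x)*(y*z))))) + (-(w*(n*(n*((w*z)*(x*y) + (z*w)*(x*y) - w*(z*(x*y)) - z*(w*(x*y))))))) + (n*((x*(n*(y*z)))*(w*w) + ((n*(y*z))*x)*(w*w) - x*((n*(y*z))*(w*w)) - (n*(y*z))*(x*(w*w))))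 + (-(n*(w*((y*(w*x))*(n*z) + ((w*x)*y)*(n*z) - y*((w*x)*(n*z)) - (w*x)*(y*(n*z)))))) + (-(n*(w*((w*(n*z))*(y*x) + ((n*z)*w)*(y*x) - w*((n*z)*(y*x)) - (n*z)*(w*(y*x)))))) + (-(n*(w*(y*(n*((w*x)*z + (w*z)*x - w*(x*z) - w*(z*x))))))) + (-(n*(w*(n*((w*(x*z))*y + ((x*z)*w)*y - w*((x*z)*y) - (x*z)*(w*y)))))) + (-(w*(n*((w*((n*x)*y - n*(x*y)))*z)))) + (-(n*(w*((((w*x)*y)*n)*z - ((w*x)*y)*(n*z))))) + (-(w*(n*(y*((n*(z*w))*x - n*((z*w)*x)))))) + (n*(w*(y*((n*(z*w))*x - n*((z*w)*x))))) + (n*(w*(((x*(y*w))*n - x*((y*w)*n))*z))) + (-(n*(w*(((y*w)*n - y*(w*n))*(x*z))))) + (-(w*(n*((n*w)*((x*y)*z) - n*(w*((x*y)*z)))))) + (-(w*(n*(w*((n*(x*y))*z - n*((x*y)*z)))))) + (n*(w*((n*(z*w))*(y*x) - n*((z*w)*(y*x))))) + (-(w*(n*(((n*x)*w - n*(x*w))*(y*z)))))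 + (n*(w*(w*((n*(x*y))*z - n*((x*y)*z))))) + (w*(n*(((n*(x*w))*y - n*((x*w)*y))*z)))) + (((x*(n*(y*(n*z))))*(w*w) + ((n*(y*(n*z)))*x)*(w*w) - x*((n*(y*(n*z)))*(w*w)) - (n*(y*(n*z)))*(x*(w*w))) + (w*((w*x)*(n*(n*(y*z))) + (w*(n*(n*(y*z))))*x - w*(x*(n*(n*(y*z)))) - w*((n*(n*(y*z)))*x))) + (-(w*(n*((x*(n*z))*(w*y) + (x*(w*y))*(n*z) - x*((n*z)*(w*y)) - x*((w*y)*(n*z)))))) + (-(w*(n*((w*y)*(n*(x*z)) + (y*w)*(n*(x*z)) - w*(y*(n*(x*z))) - y*(w*(n*(x*z))))))) + (2:ℤ) • (w*(n*(n*((y*z)*(w*x) + (y*(w*x))*z - y*(z*(w*x)) - y*((w*x)*z))))) + (-(w*(n*(n*((w*y)*(x*z) + (w*(x*z))*y - w*(y*(x*z)) - w*((x*z)*y)))))) + (-(n*((w*(y*(n*z)))*(w*x) + ((y*(n*z))*w)*(w*x) - w*((y*(n*z))*(w*x)) - (y*(n*z))*(w*(w*x))))) + (2:ℤ) • (n*(w*((y*(n*z))*(w*x)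 + (y*(w*x))*(n*z) - y*((n*z)*(w*x)) - y*((w*x)*(n*z))))) + (n*(w*((w*(n*z))*(x*y) + (w*(x*y))*(n*z) - w*((n*z)*(x*y)) - w*((x*y)*(n*z))))) + (n*(w*(y*(n*((w*x)*z + (x*w)*z - w*(x*z) - x*(w*z)))))) + (-(n*(w*(n*((w*(x*y))*z + ((x*y)*w)*z - w*((x*y)*z) - (x*y)*(w*z)))))) + (w*(n*((((w*x)*y)*n)*z - ((w*x)*y)*(n*z)))) + (n*(w*((((w*x)*y)*n - (w*x)*(y*n))*z))) + (-(w*(n*(y*(((n*z)*w - n*(z*w))*x))))) + (n*(w*(y*(((n*z)*w - n*(z*w))*x)))) + (n*(w*((x*((y*w)*n - y*(w*n)))*z))) + (-(n*(w*((n*w)*(x*(y*z)) - n*(w*(x*(y*z))))))) + (-((w*n)*((n*w)*((x*y)*z)) - w*(n*((n*w)*((x*y)*z))))) + (w*(n*((w*n)*((x*y)*z) - w*(n*((x*y)*z))))) + (n*(w*(((n*z)*w - n*(z*w))*(y*x)))) + (-(w*(n*((n*(x*y))*(w*z) - n*((x*y)*(w*z)))))) + (-(n*(w*((w*n)*((x*y)*z)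 - w*(n*((x*y)*z)))))) + (w*(n*((((n*x)*w - n*(x*w))*y)*z)))) + (((x*(n*(n*(y*z))))*(w*w) + (x*(w*w))*(n*(n*(y*z))) - x*((n*(n*(y*z)))*(w*w)) - x*((w*w)*(n*(n*(y*z))))) + (-(w*(n*(((w*(n*x))*y + ((n*x)*w)*y - w*((n*x)*y) - (n*x)*(w*y))*z)))) + (w*(n*((x*(n*z))*(w*y) + ((n*z)*x)*(w*y) - x*((n*z)*(w*y)) - (n*z)*(x*(w*y))))) + (w*(n*((w*x)*(y*(n*z)) + (w*(y*(n*z)))*x - w*(x*(y*(n*z))) - w*((y*(n*z))*x)))) + (-2:ℤ) • (w*(n*(n*((y*z)*(w*x) + (z*y)*(w*x) - y*(z*(w*x)) - z*(y*(w*x)))))) + (-(w*(n*(n*((w*x)*(y*z) + (w*(y*z))*x - w*(x*(y*z)) - w*((y*z)*x)))))) + (n*((w*(w*x))*(y*(n*z)) + (w*(y*(n*z)))*(w*x) - w*((w*x)*(y*(n*z))) - w*((y*(n*z))*(w*x)))) + (-2:ℤ) • (n*(w*((y*(n*z))*(w*x) + ((n*z)*y)*(w*x) - y*((n*z)*(w*x))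 - (n*z)*(y*(w*x))))) + (-(n*(w*((w*(n*z))*(x*y) + ((n*z)*w)*(x*y) - w*((n*z)*(x*y)) - (n*z)*(w*(x*y)))))) + (n*(w*(w*((x*y)*(n*z) + (y*x)*(n*z) - x*(y*(n*z)) - y*(x*(n*z)))))) + (-(n*(w*(n*((w*z)*(y*x) + (w*(y*x))*z - w*(z*(y*x)) - w*((y*x)*z)))))) + (-(w*(n*((((w*x)*y)*n - (w*x)*(y*n))*z)))) + (n*(w*(((w*(x*y))*n)*z - (w*(x*y))*(n*z)))) + (w*(n*(y*(w*((n*x)*z - n*(x*z)))))) + (-(n*(w*(y*(w*((n*x)*z - n*(x*z))))))) + (w*((n*(y*(n*z)))*(w*x) - n*((y*(n*z))*(w*x)))) + (-((n*w)*((n*w)*(x*(y*z))) - n*(w*((n*w)*(x*(y*z)))))) + (w*(n*((n*x)*(w*(y*z)) - n*(x*(w*(y*z)))))) + ((w*n)*((w*n)*((x*y)*z)) - w*(n*((w*n)*((x*y)*z)))) + (n*(w*((n*(z*w))*(x*y) - n*((z*w)*(x*y))))) + (-(w*(n*((n*(x*z))*(w*y) - n*((x*z)*(w*y)))))) + (-((n*w)*((w*n)*((x*y)*z))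 - n*(w*((w*n)*((x*y)*z))))) + (w*(n*((n*((x*y)*w))*z - n*(((x*y)*w)*z))))) + ((-((x*(n*(n*(y*z))))*(w*w) + ((n*(n*(y*z)))*x)*(w*w) - x*((n*(n*(y*z)))*(w*w)) - (n*(n*(y*z)))*(x*(w*w)))) + (w*(n*(((w*y)*(n*x) + (y*w)*(n*x) - w*(y*(n*x)) - y*(w*(n*x)))*z))) + (-(w*(n*((w*(y*(n*z)))*x + ((y*(n*z))*w)*x - w*((y*(n*z))*x) - (y*(n*z))*(w*x))))) + (w*(n*(y*((w*(n*z))*x + ((n*z)*w)*x - w*((n*z)*x) - (n*z)*(w*x))))) + (-(w*(n*(n*((x*(w*y))*z + ((w*y)*x)*z - x*((w*y)*z) - (w*y)*(x*z)))))) + (-(w*(n*(n*((w*x)*(y*z) + (x*w)*(y*z) - w*(x*(y*z)) - x*(w*(y*z))))))) + (-(n*((w*(n*(y*z)))*(w*x) + (w*(w*x))*(n*(y*z)) - w*((n*(y*z))*(w*x)) - w*((w*x)*(n*(y*z)))))) + (n*(w*((x*(y*(w*n)))*z + ((y*(w*n))*x)*z - x*((y*(w*n))*z) - (y*(w*n))*(x*z))))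 + (-(n*(w*((w*(n*x))*(y*z) + ((n*x)*w)*(y*z) - w*((n*x)*(y*z)) - (n*x)*(w*(y*z)))))) + (-(n*(w*(n*(((w*x)*y + (w*y)*x - w*(x*y) - w*(y*x))*z))))) + (n*(w*(n*((w*z)*(y*x) + (z*w)*(y*x) - w*(z*(y*x)) - z*(w*(y*x)))))) + (-(w*(n*(((w*(x*y))*n)*z - (w*(x*y))*(n*z))))) + (-(n*(w*(((w*(x*y))*n - w*((x*y)*n))*z)))) + (n*(w*(x*(((y*w)*n)*z - (y*w)*(n*z))))) + (-(w*((n*((y*(n*z))*w))*x - n*(((y*(n*z))*w)*x)))) + (n*(w*((((y*w)*n - y*(w*n))*x)*z))) + (n*(w*((n*w)*((x*y)*z) - n*(w*((x*y)*z))))) + (n*(w*((n*(x*w))*(y*z) - n*((x*w)*(y*z))))) + (n*(w*((n*(y*z))*(w*x) - n*((y*z)*(w*x))))) + (n*(w*(((n*z)*w - n*(z*w))*(x*y)))) + (-(n*(w*((n*((y*z)*w))*x - n*(((y*z)*w)*x))))) + (-(w*(n*((n*(z*w))*(x*y) - n*((z*w)*(x*y)))))) + (w*(n*(((n*(x*y))*w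 - n*((x*y)*w))*z)))) + ((-((w*(n*(y*(n*z))))*(w*x) + (w*(w*x))*(n*(y*(n*z))) - w*((n*(y*(n*z)))*(w*x)) - w*((w*x)*(n*(y*(n*z)))))) + (-(w*(n*(((w*y)*x + (y*w)*x - w*(y*x) - y*(w*x))*(n*z))))) + (-(w*(n*((w*(n*(x*z)))*y + ((n*(x*z))*w)*y - w*((n*(x*z))*y) - (n*(x*z))*(w*y))))) + (w*(n*(y*((w*(n*x))*z + ((n*x)*w)*z - w*((n*x)*z) - (n*x)*(w*z))))) + (w*(n*(n*((x*z)*(w*y) + (x*(w*y))*z - x*(z*(w*y)) - x*((w*y)*z))))) + (w*(n*(n*(w*((x*y)*z + (y*x)*z - x*(y*z) - y*(x*z)))))) + (n*((w*(n*(y*z)))*(w*x) + ((n*(y*z))*w)*(w*x) - w*((n*(y*z))*(w*x)) - (n*(y*z))*(w*(w*x)))) + (-(n*(w*((x*(y*w))*(n*z) + ((y*w)*x)*(n*z) - x*((y*w)*(n*z)) - (y*w)*(x*(n*z)))))) + (-(n*(w*((w*y)*(x*(n*z)) + (y*w)*(x*(n*z)) - w*(y*(x*(n*z))) - y*(w*(x*(n*z)))))))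 + (-(n*(w*(n*(((w*x)*y + (x*w)*y - w*(x*y) - x*(w*y))*z))))) + (-(n*(w*(n*((w*z)*(x*y) + (w*(x*y))*z - w*(z*(x*y)) - w*((x*y)*z)))))) + (w*(n*(((w*(x*y))*n - w*((x*y)*n))*z))) + (-(n*(w*((w*((x*y)*n - x*(y*n)))*z)))) + (-(n*(w*(x*(((y*w)*n - y*(w*n))*z))))) + (-(w*(((n*(y*(n*z)))*w - n*((y*(n*z))*w))*x))) + (-(n*(w*((((y*w)*n)*x - (y*w)*(n*x))*z)))) + ((n*w)*((n*w)*((x*y)*z)) - n*(w*((n*w)*((x*y)*z)))) + (n*(w*(((n*x)*w - n*(x*w))*(y*z)))) + (w*(n*((n*z)*(w*(x*y)) - n*(z*(w*(x*y)))))) + (-(n*(w*((n*((x*w)*y))*z - n*(((x*w)*y)*z))))) + (-(n*(w*(((n*(y*z))*w - n*((y*z)*w))*x)))) + (-(w*(n*(((n*z)*w - n*(z*w))*(x*y))))) + (w*(n*((n*((x*z)*w))*y - n*(((x*z)*w)*y))))) + (((w*(n*(y*(n*z))))*(w*x) + ((n*(y*(n*z)))*w)*(w*x) - w*((n*(y*(n*z)))*(w*x))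 - (n*(y*(n*z)))*(w*(w*x))) + (-(w*(n*(((w*x)*(y*n) + (w*(y*n))*x - w*(x*(y*n)) - w*((y*n)*x))*z)))) + (-(w*(n*((w*(n*(x*y)))*z + ((n*(x*y))*w)*z - w*((n*(x*y))*z) - (n*(x*y))*(w*z))))) + (-(w*(n*(y*((w*x)*(n*z) + (w*(n*z))*x - w*(x*(n*z)) - w*((n*z)*x)))))) + (-(w*(n*(n*((x*z)*(w*y) + (z*x)*(w*y) - x*(z*(w*y)) - z*(x*(w*y))))))) + (n*(((w*w)*x - w*(w*x))*(y*(n*z)))) + (-(n*((w*w)*(x*(y*(n*z))) - w*(w*(x*(y*(n*z))))))) + (-(n*(w*((x*(w*y))*(n*z) + ((w*y)*x)*(n*z) - x*((w*y)*(n*z)) - (w*y)*(x*(n*z)))))) + (-(n*(w*((w*y)*(n*(x*z)) + (w*(n*(x*z)))*y - w*(y*(n*(x*z))) - w*((n*(x*z))*y))))) + (2:ℤ) • (n*(w*(n*((y*(w*x))*z + ((w*x)*y)*z - y*((w*x)*z) - (w*x)*(y*z))))) + (n*(w*(n*((w*z)*(x*y) + (z*w)*(x*y) - w*(z*(x*y))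 - z*(w*(x*y)))))) + (w*(n*((w*((x*y)*n - x*(y*n)))*z))) + (n*(w*((w*((y*n)*x - y*(n*x)))*z))) + (w*(n*(((x*(y*w))*n)*z - (x*(y*w))*(n*z)))) + (-(w*(n*((((y*w)*n - y*(w*n))*x)*z)))) + (-(w*(n*(((y*w)*n)*(x*z) - (y*w)*(n*(x*z)))))) + (-(n*(w*((n*x)*(w*(y*z)) - n*(x*(w*(y*z))))))) + (n*(w*((n*(x*y))*(w*z) - n*((x*y)*(w*z))))) + (w*(n*((n*z)*(w*(y*x)) - n*(z*(w*(y*x)))))) + (-(n*(w*(((n*(x*w))*y - n*((x*w)*y))*z)))) + (-(w*(n*((n*(x*(w*y)))*z - n*((x*(w*y))*z))))) + (-(w*(n*((n*(z*w))*(y*x) - n*((z*w)*(y*x)))))) + (w*(n*(((n*(x*z))*w - n*((x*z)*w))*y)))) + (((w*(n*(n*(y*z))))*(w*x) + (w*(w*x))*(n*(n*(y*z))) - w*((n*(n*(y*z)))*(w*x)) - w*((w*x)*(n*(n*(y*z))))) + (w*(n*((y*(w*(n*x)))*z + ((w*(n*x))*y)*z - y*((w*(n*x))*z) - (w*(n*x))*(y*z))))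 + (-(w*(n*((w*(n*z))*(y*x) + (w*(y*x))*(n*z) - w*((n*z)*(y*x)) - w*((y*x)*(n*z)))))) + (-(w*(n*(y*(n*((w*z)*x + (z*w)*x - w*(z*x) - z*(w*x))))))) + (w*(n*(n*((w*(y*z))*x + ((y*z)*w)*x - w*((y*z)*x) - (y*z)*(w*x))))) + (-(n*(((w*w)*x - w*(w*x))*(n*(y*z))))) + (n*((w*w)*(x*(n*(y*z))) - w*(w*(x*(n*(y*z)))))) + (n*(w*((x*(n*z))*(w*y) + (x*(w*y))*(n*z) - x*((n*z)*(w*y)) - x*((w*y)*(n*z))))) + (n*(w*((w*y)*(n*(x*z)) + (y*w)*(n*(x*z)) - w*(y*(n*(x*z))) - y*(w*(n*(x*z)))))) + (-2:ℤ) • (n*(w*(n*((y*z)*(w*x) + (y*(w*x))*z - y*(z*(w*x)) - y*((w*x)*z))))) + (n*(w*(n*((w*y)*(x*z) + (w*(x*z))*y - w*(y*(x*z)) - w*((x*z)*y))))) + (-(w*(n*((w*((y*n)*x - y*(n*x)))*z)))) + (w*(n*(y*((n*x)*(w*z) - n*(x*(w*z)))))) + (-(w*(n*(((x*(y*w))*n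 - x*((y*w)*n))*z)))) + (w*(n*((((y*w)*n)*x - (y*w)*(n*x))*z))) + (w*(n*(((y*w)*n - y*(w*n))*(x*z)))) + (-(n*(w*((n*z)*(w*(x*y)) - n*(z*(w*(x*y))))))) + (w*(n*(w*((n*x)*(y*z) - n*(x*(y*z)))))) + (w*(n*((n*z)*(x*(w*y)) - n*(z*(x*(w*y)))))) + (-(n*(w*((((n*x)*w - n*(x*w))*y)*z)))) + (-(w*(n*(((n*x)*(w*y) - n*(x*(w*y)))*z)))) + (-(w*(n*(((n*z)*w - n*(z*w))*(y*x))))) + (w*(n*((n*((y*z)*w))*x - n*(((y*z)*w)*x))))) + ((-((w*(n*(n*(y*z))))*(w*x) + ((n*(n*(y*z)))*w)*(w*x) - w*((n*(n*(y*z)))*(w*x)) - (n*(n*(y*z)))*(w*(w*x)))) + (w*(n*((y*(w*x))*(n*z) + ((w*x)*y)*(n*z) - y*((w*x)*(n*z)) - (w*x)*(y*(n*z))))) + (w*(n*((w*(n*z))*(y*x) + ((n*z)*w)*(y*x) - w*((n*z)*(y*x)) - (n*z)*(w*(y*x))))) + (w*(n*(y*(n*((w*x)*z + (w*z)*x - w*(x*z)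 - w*(z*x)))))) + (w*(n*(n*((w*(x*z))*y + ((x*z)*w)*y - w*((x*z)*y) - (x*z)*(w*y))))) + (-(n*((x*(y*(n*z)))*(w*w) + ((y*(n*z))*x)*(w*w) - x*((y*(n*z))*(w*w)) - (y*(n*z))*(x*(w*w))))) + (n*(w*(((w*(n*x))*y + ((n*x)*w)*y - w*((n*x)*y) - (n*x)*(w*y))*z))) + (-(n*(w*((x*(n*z))*(w*y) + ((n*z)*x)*(w*y) - x*((n*z)*(w*y)) - (n*z)*(x*(w*y)))))) + (-(n*(w*((w*x)*(n*(y*z)) + (w*(n*(y*z)))*x - w*(x*(n*(y*z))) - w*((n*(y*z))*x))))) + (2:ℤ) • (n*(w*(n*((y*z)*(w*x) + (z*y)*(w*x) - y*(z*(w*x)) - z*(y*(w*x)))))) + (n*(w*(n*((w*x)*(y*z) + (w*(y*z))*x - w*(x*(y*z)) - w*((y*z)*x))))) + (-(w*(n*((((w*y)*n - w*(y*n))*x)*z)))) + (n*(w*((((w*y)*n - w*(y*n))*x)*z))) + (-(w*(n*((x*((y*w)*n - y*(w*n)))*z)))) + ((n*((n*(y*z))*w))*(w*x) - n*(((n*(y*z))*w)*(w*x)))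 + (-((n*((y*(n*z))*w))*(w*x) - n*(((y*(n*z))*w)*(w*x)))) + (-(n*(w*((n*z)*(w*(y*x)) - n*(z*(w*(y*x))))))) + (-(w*(n*((w*n)*(x*(y*z)) - w*(n*(x*(y*z))))))) + (n*(w*((n*(z*x))*(w*y) - n*((z*x)*(w*y))))) + (-(n*(w*((n*((x*y)*w))*z - n*(((x*y)*w)*z))))) + (-(n*(w*(w*((n*x)*(y*z) - n*(x*(y*z))))))) + (-(w*(n*((n*(z*x))*(w*y) - n*((z*x)*(w*y)))))) + (w*(n*(((n*(y*z))*w - n*((y*z)*w))*x)))) := by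
    simp only [mul_add, add_mul, mul_sub, sub_mul, mul_neg, neg_mul, smul_add, smul_sub, zsmul_eq_mul]
    abel
  rw [total, e0, e1, e2, e3, e4, e5, e6, e7, e8, e9, e10, e11]
  abel
end

section
/- Let R be an alternative ring whose additive group has no 2-torsion (2*x = 0 implies x = 0). If x, y, z in R pairwise commute (x*y = y*x, x*z = z*x, y*z = z*y), then x*y commutes with z, i.e. (x*y)*z = z*(x*y). -/
theorem stmt_11 {R : Type*} [NonUnitalNonAssocRing R]
    (hl : ∀ x y : R, (x*x)*y = x*(x*y))
    (hr : ∀ x y : R, (y*x)*x = y*(x*x))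
    (h2 : ∀ x : R, (2 : ℕ) • x = 0 → x = 0)
    (x y z : R) (hxy : x*y = y*x) (hxz : x*z = z*x) (hyz : y*z = z*y) :
    (x*y)*z = z*(x*y) := by
  have L1 : ∀ a b c : R, (a*b)*c + (b*a)*c = a*(b*c) + b*(a*c) := by
    intro a b c
    have h := hl (a+b) c
    simp only [add_mul, mul_add] at h
    linear_combination (norm := abel1) h - hl a c - hl b c
  have L2 : ∀ a b c : R, a*(b*c) + a*(c*b) = (a*b)*c + (a*c)*b := by
    intro a b c
    have h := hr (b+c) a
    simp only [add_mul, mul_add] at h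
    linear_combination (norm := abel1) hr b a + hr c a - h
  have key : (2 : ℕ) • ((x*y)*z - z*(x*y)) = 0 := by
    have c1 : (x*y)*z = (y*x)*z := congrArg (· * z) hxy
    have c2 : z*(x*y) = z*(y*x) := congrArg (z * ·) hxy
    have c3 : (x*z)*y = (z*x)*y := congrArg (· * y) hxz
    have c4 : y*(x*z) = y*(z*x) := congrArg (y * ·) hxz
    have c5 : (y*z)*x = (z*y)*x := congrArg (· * x) hyz
    have c6 : x*(y*z) = x*(z*y) := congrArg (x * ·) hyz
    have e : (x*y)*z - z*(x*y) + ((x*y)*z - z*(x*y)) = 0 := by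
      linear_combination (norm := abel1) L1 x y z + L1 x y z + L1 x y z +
        L2 x y z + L2 x y z + L1 x z y + L2 y x z + L2 y x z + L1 y z x +
        c1 - c2 + c3 + c4 + c5 + c6
    rw [two_nsmul]; exact e
  exact sub_eq_zero.mp (h2 _ key)
end

section
/- Let R be an alternative ring in which every non-zero commutator [a,b] = a*b - b*a is not a left zero divisor (i.e. if [a,b] ≠ 0 and [a,b]*t = 0 then t = 0). If x in R satisfies x*t = 0 for some t, then [x, y*x]*t = 0 for every y in R. -/
theorem stmt_15 {R : Type*} [NonUnitalNonAssocRing R]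
    (hl : ∀ x y : R, (x*x)*y = x*(x*y))
    (hr : ∀ x y : R, (y*x)*x = y*(x*x))
    (hA : ∀ a b : R, a*b - b*a ≠ 0 → ∀ t : R, (a*b - b*a)*t = 0 → t = 0) :
    ∀ x t : R, x*t = 0 → ∀ y : R, (x*(y*x) - (y*x)*x)*t = 0 := by
  have L1 : ∀ a b c : R, (a*b)*c + (b*a)*c = a*(b*c) + b*(a*c) := by
    intro a b c
    have h := hl (a+b) c
    simp only [add_mul, mul_add] at h
    have ha := hl a c
    have hb := hl b c
    linear_combination (norm := abel) h - ha - hb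
  have R1 : ∀ a b c : R, c*(a*b) + c*(b*a) = (c*a)*b + (c*b)*a := by
    intro a b c
    have h := hr (a+b) c
    simp only [add_mul, mul_add] at h
    have ha := hr a c
    have hb := hr b c
    linear_combination (norm := abel) ha + hb - h
  intro x t hxt y
  by_cases htx : t*x = 0
  · linear_combination (norm := (simp only [hxt, htx, mul_add, add_mul, mul_sub, sub_mul, mul_zero, zero_mul]; abel))
      - (x * (L1 t y x))
      + ((R1 t y x) * x)
      - (x * (R1 t x y))
      + ((L1 y x t) * x)
      + (hr x (t * y))
      + (R1 t x (y * x))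
      - (R1 t (y * x) x)
      - (L1 (t * y) x x)
  · have key : (t*x) * ((x*(y*x) - (y*x)*x)*t) = 0 := by
      linear_combination (norm := (simp only [hxt, mul_add, add_mul, mul_sub, sub_mul, mul_zero, zero_mul]; abel))
        - ((t * x) * (L1 (t * y) x x))
      - ((t * x) * (R1 t (y * x) x))
      - ((t * x) * (x * (L1 t y x)))
      - ((t * x) * (x * (R1 t x y)))
      + ((t * x) * (L1 t (y * x) x))
      + ((t * x) * (t * (hr x y)))
      + ((t * x) * (t * (hr x y)))
      + ((t * x) * ((L1 t y x) * x))
      + ((t * x) * (R1 t x (y * x)))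
      - (t * (x * ((R1 t y x) * x)))
      - (t * (x * ((L1 y x t) * x)))
      - (t * (x * ((R1 t x y) * x)))
      - (t * (hl x ((t * y) * x)))
      - (t * (x * (t * (hr x y))))
      - (t * (x * ((hr x y) * t)))
      + (t * (x * (L1 t y (x * x))))
      - (R1 t (x * (y * x)) (t * x))
      - ((t * x) * (L1 t (x * y) x))
      - ((t * x) * (t * (L1 y x x)))
      - ((t * x) * ((L1 t x y) * x))
      - ((t * x) * (R1 t x (x * y)))
      - ((t * x) * ((L1 y x x) * t))
      - (hl (t * x) (y * x))
      + ((t * x) * (L1 y (t * x) x))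
      + ((t * x) * (y * (hr x t)))
      - ((t * x) * (hr x (y * t)))
      - ((t * x) * (L1 t y (x * x)))
      + ((t * x) * ((hr x y) * t))
      - ((L1 t x t) * (x * (y * x)))
      + ((hr t x) * (x * (y * x)))
      - ((R1 t (x * (y * x)) x) * t)
      - ((L1 t x (x * (y * x))) * t)
      + ((t * (hl x (y * x))) * t)
      - ((x * (R1 t (y * x) x)) * t)
      - ((x * (x * (L1 t y x))) * t)
      - ((x * (x * (R1 t x y))) * t)
      + (((hl x (y * x)) * t) * t)
      + (((L1 t x t) * x) * (y * x))
      - (((hr t x) * x) * (y * x))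
      - ((L1 t (t * x) x) * (y * x))
      - ((L1 t (t * x) x) * (y * x))
      + ((hl t (x * x)) * (y * x))
      + ((hl t (x * x)) * (y * x))
      - ((t * (hr x t)) * (y * x))
      - ((t * (hr x t)) * (y * x))
      + ((hr x (t * t)) * (y * x))
      + ((hr x (t * t)) * (y * x))
      - (((hl t x) * x) * (y * x))
      - (((hl t x) * x) * (y * x))
      - (L1 t (x * x) ((t * y) * x))
      + (t * (x * (L1 (t * y) x x)))
      + (t * (x * (R1 t (x * x) y)))
      - (t * (x * (L1 t (y * x) x)))
      - (t * (x * (y * (hl x t))))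
      - (t * (x * ((L1 t y x) * x)))
      - (t * (x * (R1 t x (y * x))))
      + ((x * x) * (R1 t (t * x) y))
      - ((x * x) * (L1 t (y * t) x))
      + ((x * x) * (L1 t y (t * x)))
      - ((x * x) * (t * (L1 t y x)))
      - ((x * x) * (y * (L1 t x t)))
      + ((x * x) * (y * (hr t x)))
      - ((x * x) * ((L1 t y t) * x))
      - ((x * x) * (R1 t x (y * t)))
      - (R1 t (t * (y * x)) (x * x))
      - ((x * x) * ((L1 t y x) * t))
      - ((x * x) * (R1 t x (t * y)))
      + ((x * x) * ((hr t y) * x))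
      + (R1 t (y * x) (t * (x * x)))
      + ((t * (x * x)) * (L1 t y x))
      + ((t * (x * x)) * (R1 t x y))
      - (((hr x t) * t) * (y * x))
      + ((hl x t) * ((t * y) * x))
      - ((hl x t) * (t * (y * x)))
      + ((L1 t (x * x) (y * x)) * t)
      - ((R1 t x (t * x)) * (y * x))
      + ((R1 t (y * x) (x * x)) * t)
      + (((x * x) * (L1 t y x)) * t)
      + (((x * x) * (R1 t x y)) * t)
      - ((hl x ((t * y) * x)) * t)
    have hc : t*x - x*t ≠ 0 := by rwa [hxt, sub_zero]
    refine hA t x hc _ ?_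
    rwa [hxt, sub_zero]
end

section
/- Let R be an alternative ring in which every non-zero commutator is not a left zero divisor. If x in R is not in the commutative center (there exists y with x*y ≠ y*x), then x is not a left zero divisor: x*t = 0 implies t = 0. -/
theorem stmt_16 {R : Type*} [NonUnitalNonAssocRing R]
    (hl : ∀ x y : R, (x*x)*y = x*(x*y))
    (hr : ∀ x y : R, (y*x)*x = y*(x*x))
    (hA : ∀ a b : R, a*b - b*a ≠ 0 → ∀ t : R, (a*b - b*a)*t = 0 → t = 0)
    (x : R) (hx : ∃ y : R, x*y ≠ y*x) :
    ∀ t : R, x*t = 0 → t = 0 := by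
  have Lhl : ∀ a b c : R, (a*b)*c + (b*a)*c = a*(b*c) + b*(a*c) := fun a b c => by
    linear_combination (norm := (simp only [mul_add, add_mul]; abel)) hl (a+b) c - hl a c - hl b c
  have Lhr : ∀ a b c : R, (a*b)*c + (a*c)*b = a*(b*c) + a*(c*b) := fun a b c => by
    linear_combination (norm := (simp only [mul_add, add_mul]; abel)) hr (b+c) a - hr b a - hr c a
  have flex : ∀ a b : R, (a*b)*a = a*(b*a) := fun a b => by
    linear_combination (norm := abel) Lhl a b a - hr a b
  obtain ⟨y, hy⟩ := hx
  intro t ht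
  by_cases htx : t*x = 0
  · -- main case: x*t = 0 and t*x = 0
    have key : ((x*y)*x)*t - ((y*x)*x)*t = 0 := by
      linear_combination (norm := (simp only [mul_add, add_mul, ht, htx, mul_zero, zero_mul, add_zero, zero_add]; abel)) (Lhl (y*x) x t) + (x * Lhl x y t) + (hl x (y*t)) + (Lhl (x*x) y t) - (Lhr y (x*x) t) - (Lhr y (x*x) t) - (Lhr y (x*x) t) + (Lhr x x y * t) - (hr x t * y) + (Lhl t y (x*x)) + (Lhl t y (x*x)) + (Lhl t y (x*x)) - (Lhr t (x*x) y) - (Lhr t (x*x) y) - (Lhr t (x*x) y) + (Lhl t x (x*y)) - (Lhr x (x*y) t) - (t * hl x y) - (hl x y * t) - (hl x y * t) - (hr x y * t) - (hr x y * t) - (y * hl x t) - (y * hl x t) + (Lhl (x*x) t y) + (Lhl (x*x) t y) + (hl x (t*y)) + (hl x (t*y)) - (x * Lhr x t y) - (x * Lhr x t y) - (hl x t * y) - (hl x t * y)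
    by_cases hcx : x*(y*x) - (y*x)*x = 0
    · have hc : x*y - y*x ≠ 0 := sub_ne_zero.mpr hy
      have hx0 : x = 0 := by
        refine hA x y hc x ?_
        rw [sub_mul, flex x y]
        exact hcx
      exact absurd (by rw [hx0, zero_mul, mul_zero]) hy
    · refine hA x (y*x) hcx t ?_
      rw [sub_mul, ← flex x y]
      exact key
  · -- t*x ≠ 0 : use the commutator x*t - t*x = -(t*x)
    have hc : x*t - t*x ≠ 0 := by
      rw [ht, zero_sub]
      exact neg_ne_zero.mpr htx
    refine hA x t hc t ?_
    rw [ht, zero_sub, neg_mul, flex t x, ht, mul_zero, neg_zero]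
end

section
/- Let R be an alternative ring that is not associative. Assume (A): every non-zero commutator [a,b] = a*b - b*a is not a left zero divisor; and (B): if x in R and y, z both lie in the commutative center Z of R, then (x*y)*z = x*(y*z). Then every non-zero element z of Z is not a left zero divisor: z*t = 0 implies t = 0. -/
namespace Stmt17Aux
variable {R : Type*} [NonUnitalNonAssocRing R]

/-- The associator. -/
def Aas (x y z : R) : R := (x*y)*z - x*(y*z)

lemma swap12 (hl : ∀ x y : R, (x*x)*y = x*(x*y)) (x y z : R) :
    Aas x y z + Aas y x z = 0 := by
  have h := hl (x+y) z
  simp only [add_mul, mul_add] at h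
  rw [hl x z, hl y z] at h
  unfold Aas
  linear_combination (norm := abel1) h

lemma swap23 (hr : ∀ x y : R, (y*x)*x = y*(x*x)) (x y z : R) :
    Aas x y z + Aas x z y = 0 := by
  have h := hr (y+z) x
  simp only [add_mul, mul_add] at h
  rw [hr y x, hr z x] at h
  unfold Aas
  linear_combination (norm := abel1) h

lemma cyc (hl : ∀ x y : R, (x*x)*y = x*(x*y)) (hr : ∀ x y : R, (y*x)*x = y*(x*x))
    (x y z : R) : Aas x y z = Aas y z x := by
  have h1 := swap12 hl x y z
  have h2 := swap23 hr y x z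
  linear_combination (norm := abel1) h1 - h2

/-- 3·A(x,y,z) = 0 when z is central. -/
lemma three (hl : ∀ x y : R, (x*x)*y = x*(x*y)) (hr : ∀ x y : R, (y*x)*x = y*(x*x))
    (z : R) (hz : ∀ r : R, z*r = r*z) (x y : R) :
    Aas x y z + Aas x y z + Aas x y z = 0 := by
  have key : Aas x y z = Aas x z y - Aas z x y := by
    unfold Aas
    have e1 : z*(x*y) = (x*y)*z := hz (x*y)
    have e2 : (z*x)*y = (x*z)*y := by rw [hz x]
    have e3 : x*(z*y) = x*(y*z) := by rw [hz y]
    linear_combination (norm := abel1) e2 - e1 + e3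
  have h1 : Aas x z y = -Aas x y z := by
    have := swap23 hr x y z; linear_combination (norm := abel1) this
  have h2 : Aas z x y = Aas x y z := cyc hl hr z x y
  rw [h1, h2] at key
  linear_combination (norm := abel1) key

/-- [a,b]·z = [a·z, b] for central z. -/
lemma comm_mul_central (hl : ∀ x y : R, (x*x)*y = x*(x*y))
    (hr : ∀ x y : R, (y*x)*x = y*(x*x))
    (z : R) (hz : ∀ r : R, z*r = r*z) (a b : R) :
    (a*z)*b - b*(a*z) = (a*b - b*a)*z := by
  have h1 : (a*z)*b = (a*b)*z - Aas a b z - Aas a b z := by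
    have s23 := swap23 hr a b z
    have e : a*(z*b) = a*(b*z) := by rw [hz b]
    simp only [Aas] at s23 ⊢
    linear_combination (norm := abel1) e + s23
  have h2 : b*(a*z) = (b*a)*z - Aas a b z - Aas a b z := by
    have c12 := swap12 hl z b a
    have cy := cyc hl hr a b z
    have e1 : b*(a*z) = b*(z*a) := by rw [← hz a]
    have e2 : (z*b)*a = (b*z)*a := by rw [hz b]
    have e3 : z*(b*a) = (b*a)*z := hz (b*a)
    simp only [Aas] at c12 cy ⊢
    linear_combination (norm := abel1) e1 - e2 + e3 + c12 + cy + cy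
  rw [h1, h2, sub_mul]
  abel

end Stmt17Aux

open Stmt17Aux in
theorem stmt_17 {R : Type*} [NonUnitalNonAssocRing R]
    (hl : ∀ x y : R, (x*x)*y = x*(x*y))
    (hr : ∀ x y : R, (y*x)*x = y*(x*x))
    (hna : ∃ a b c : R, (a*b)*c ≠ a*(b*c))
    (hA : ∀ a b : R, a*b - b*a ≠ 0 → ∀ t : R, (a*b - b*a)*t = 0 → t = 0)
    (hB : ∀ x y z : R, (∀ r : R, y*r = r*y) → (∀ r : R, z*r = r*z) →
      (x*y)*z = x*(y*z)) :
    ∀ z : R, (∀ r : R, z*r = r*z) → z ≠ 0 → ∀ t : R, z*t = 0 → t = 0 := by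
  intro z hz hz0 t hzt
  -- every commutator [s,t] annihilated by z on the right
  have ann : ∀ s : R, (s*t - t*s)*z = 0 := by
    intro s
    have hst : (s*t)*z = Aas s t z := by
      simp only [Aas]
      have e3 : s*(t*z) = 0 := by rw [← hz t, hzt, mul_zero]
      rw [e3, sub_zero]
    have hts : (t*s)*z = -Aas s t z - Aas s t z := by
      have e4 : (t*z)*s = 0 := by rw [← hz t, hzt, zero_mul]
      have e5 : t*(z*s) = t*(s*z) := by rw [hz s]
      have s23 := swap23 hr t s z
      have cy := cyc hl hr s t z
      simp only [Aas] at s23 cy ⊢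
      linear_combination (norm := abel1) s23 + cy + cy - e5 + e4
    rw [sub_mul, hst, hts]
    have h3 := three hl hr z hz s t
    linear_combination (norm := abel1) h3
  -- hence t is central
  have ht : ∀ r : R, t*r = r*t := by
    intro r
    by_contra hne
    have h1 : r*t - t*r ≠ 0 := sub_ne_zero.mpr (fun h => hne h.symm)
    exact hz0 (hA r t h1 z (ann r))
  -- R is not commutative
  obtain ⟨a, b, hab⟩ : ∃ a b : R, a*b ≠ b*a := by
    by_contra hc
    push_neg at hc
    obtain ⟨a, b, c, h⟩ := hna
    exact h (hB a b c (hc b) (hc c))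
  -- [a,b]·z is a nonzero commutator annihilating t
  have cne : (a*b - b*a)*z ≠ 0 := fun h => hz0 (hA a b (sub_ne_zero.mpr hab) z h)
  have key := comm_mul_central hl hr z hz a b
  have ct : ((a*b - b*a)*z)*t = 0 := by
    rw [hB (a*b - b*a) z t hz ht, hzt, mul_zero]
  exact hA (a*z) b (by rw [key]; exact cne) t (by rw [key]; exact ct)
end

section
/- Let R be an alternative ring in which every non-zero commutator [a,b] = a*b - b*a is neither a left nor a right zero divisor. If a non-zero r in R is not a left zero divisor (r*t = 0 implies t = 0), then r is also not a right zero divisor (s*r = 0 implies s = 0). -/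
theorem stmt_19 {R : Type*} [NonUnitalNonAssocRing R]
    (hl : ∀ x y : R, (x*x)*y = x*(x*y))
    (hr : ∀ x y : R, (y*x)*x = y*(x*x))
    (hA : ∀ a b : R, a*b - b*a ≠ 0 →
      (∀ t : R, (a*b - b*a)*t = 0 → t = 0) ∧
      (∀ s : R, s*(a*b - b*a) = 0 → s = 0))
    (r : R) (hr0 : r ≠ 0) (hleft : ∀ t : R, r*t = 0 → t = 0) :
    ∀ s : R, s*r = 0 → s = 0 := by
  have flex : ∀ a b : R, (a*b)*a = a*(b*a) := by
    intro a b
    have e := hr (b+a) a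
    simp only [mul_add, add_mul] at e
    rw [hr b a, hl a b, hr a a] at e
    linear_combination (norm := abel) e
  intro s hsr
  by_cases hc : r*s - s*r = 0
  · apply hleft
    rw [hsr, sub_zero] at hc
    exact hc
  · refine (hA r s hc).2 s ?_
    rw [mul_sub, hsr, mul_zero, sub_zero, ← flex s r, hsr, zero_mul]
end
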